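/- arXiv:1512.06499 — 2 statements merged into one kernel-verified Lean document; each statement's English description precedes it below -/
import Mathlib

section
/- Information spectrum of a mixture concentrates on component entropies: under the mixture setup with H(X_j) − γ > H(X_{j+1}) + γ for all j, for all sufficiently large n and each i, α_i − 2γ ≤ Pr[ |(1/n) log(1/P_{X^n}(X^n)) − H(X_i)| ≤ γ ] ≤ α_i + 2γ. -/
open scoped ENNReal

/-- The mixture of `m` i.i.d. sources with weights `w` and per-letter
distributions `P`: `P_{X^n}(x^n) = ∑_k w_k ∏_t P_k(x_t)`. -/
noncomputable def mixProd {X : Type*} {m : ℕ} (w : Fin m → ℝ) (P : Fin m → X → ℝ≥0∞)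
    (n : ℕ) (x : Fin n → X) : ℝ≥0∞ :=
  ∑ k, ENNReal.ofReal (w k) * ∏ t, P k (x t)

open Finset
set_option linter.unusedSectionVars false

namespace MixAEP
variable {X : Type*} [Countable X]

lemma tsum_pi_prod : ∀ (n : ℕ) (f : Fin n → X → ℝ≥0∞),
    ∑' x : Fin n → X, ∏ t, f t (x t) = ∏ t, ∑' y, f t y := by
  intro n
  induction n with
  | zero =>
    intro f
    haveI : Unique (Fin 0 → X) := ⟨⟨fun i => i.elim0⟩, fun f => funext fun i => i.elim0⟩
    rw [tsum_eq_single (default : Fin 0 → X) (fun b hb => absurd (Unique.eq_default b) hb)]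
    simp
  | succ n ih =>
    intro f
    rw [← (Fin.consEquiv fun _ => X).tsum_eq (fun x => ∏ t, f t (x t))]
    rw [ENNReal.tsum_prod']
    have key : ∀ (a : X) (b : Fin n → X),
        (∏ t, f t ((Fin.consEquiv fun _ => X) (a, b) t)) =
          f 0 a * ∏ t : Fin n, f t.succ (b t) := by
      intro a b
      rw [Fin.prod_univ_succ]
      simp [Fin.consEquiv]
    simp only [key]
    rw [Fin.prod_univ_succ]
    have h1 : ∀ a : X, (∑' b : Fin n → X, f 0 a * ∏ t : Fin n, f t.succ (b t)) =
        f 0 a * ∑' b : Fin n → X, ∏ t : Fin n, f t.succ (b t) := fun a => ENNReal.tsum_mul_left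
    rw [tsum_congr h1, ENNReal.tsum_mul_right, ih (fun t y => f t.succ y)]

lemma prod_pair_eq {M : Type*} [CommMonoid M] {n : ℕ} {s t : Fin n} (hst : s ≠ t)
    (c : Fin n → M) (h : ∀ u, u ≠ s → u ≠ t → c u = 1) : ∏ u, c u = c s * c t := by
  rw [← Finset.prod_subset (Finset.subset_univ ({s, t} : Finset (Fin n)))
    (fun x _ hx => h x (fun e => hx (by simp [e])) (fun e => hx (by simp [e])))]
  exact Finset.prod_pair hst

section P
variable (p : X → ℝ≥0∞)

noncomputable def pr (y : X) : ℝ := (p y).toReal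
noncomputable def Lam (n : ℕ) (x : Fin n → X) : ℝ≥0∞ := ∏ t, p (x t)
noncomputable def nu (n : ℕ) (x : Fin n → X) : ℝ := ∏ t, pr p (x t)

lemma marked (n : ℕ) (F : Fin n → X → ℝ≥0∞) :
    ∑' x : Fin n → X, Lam p n x * ∏ t, F t (x t) = ∏ t, ∑' y, p y * F t y := by
  have := tsum_pi_prod n (fun t y => p y * F t y)
  unfold Lam
  simpa [Finset.prod_mul_distrib] using this

variable (hp : ∑' y, p y = 1)
include hp

lemma p_le_one (y : X) : p y ≤ 1 := hp ▸ ENNReal.le_tsum y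
lemma p_ne_top (y : X) : p y ≠ ⊤ := ((p_le_one p hp y).trans_lt ENNReal.one_lt_top).ne
lemma pr_nonneg (y : X) : 0 ≤ pr p y := ENNReal.toReal_nonneg
lemma pr_le_one (y : X) : pr p y ≤ 1 := by
  simpa [pr] using ENNReal.toReal_mono (by simp) (p_le_one p hp y)
lemma ofReal_pr (y : X) : ENNReal.ofReal (pr p y) = p y := ENNReal.ofReal_toReal (p_ne_top p hp y)

lemma tsum_Lam (n : ℕ) : ∑' x : Fin n → X, Lam p n x = 1 := by
  unfold Lam; rw [tsum_pi_prod]; simp [hp]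

lemma Lam_le_one (n : ℕ) (x : Fin n → X) : Lam p n x ≤ 1 :=
  Finset.prod_le_one (fun _ _ => by positivity) (fun t _ => p_le_one p hp (x t))

lemma Lam_ne_top (n : ℕ) (x : Fin n → X) : Lam p n x ≠ ⊤ :=
  ((Lam_le_one p hp n x).trans_lt ENNReal.one_lt_top).ne

lemma Lam_toReal (n : ℕ) (x : Fin n → X) : (Lam p n x).toReal = nu p n x := by
  unfold Lam nu pr; exact ENNReal.toReal_prod _ _

lemma ofReal_nu (n : ℕ) (x : Fin n → X) : ENNReal.ofReal (nu p n x) = Lam p n x := by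
  rw [← Lam_toReal p hp]; exact ENNReal.ofReal_toReal (Lam_ne_top p hp n x)

lemma nu_nonneg (n : ℕ) (x : Fin n → X) : 0 ≤ nu p n x :=
  Finset.prod_nonneg fun t _ => pr_nonneg p hp (x t)

lemma summable_nu (n : ℕ) : Summable (nu p n) := by
  have := ENNReal.summable_toReal (f := Lam p n) (by rw [tsum_Lam p hp]; exact ENNReal.one_ne_top)
  simpa [funext (Lam_toReal p hp n)] using this

lemma tsum_nu (n : ℕ) : ∑' x : Fin n → X, nu p n x = 1 := by
  have h := ENNReal.tsum_toReal_eq (f := Lam p n) (Lam_ne_top p hp n)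
  rw [tsum_Lam p hp] at h
  simpa [funext (Lam_toReal p hp n)] using h.symm

lemma summable_nu_mul (n : ℕ) {h : (Fin n → X) → ℝ} {C : ℝ} (hC : ∀ x, |h x| ≤ C) :
    Summable fun x => nu p n x * h x := by
  have habs : Summable fun x => |nu p n x * h x| := by
    apply Summable.of_nonneg_of_le (fun x => abs_nonneg _) (fun x => ?_)
      ((summable_nu p hp n).mul_left C)
    rw [abs_mul, abs_of_nonneg (nu_nonneg p hp n x)]
    calc nu p n x * |h x| ≤ nu p n x * C :=
          mul_le_mul_of_nonneg_left (hC x) (nu_nonneg p hp n x)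
      _ = C * nu p n x := mul_comm _ _
  exact habs.of_abs

/-- ENNReal marginal: one marked coordinate. -/
lemma marg_one (n : ℕ) (s : Fin n) (f : X → ℝ≥0∞) :
    ∑' x : Fin n → X, Lam p n x * f (x s) = ∑' y, p y * f y := by
  have h := marked p n (fun u y => if u = s then f y else 1)
  have h1 : ∀ x : Fin n → X, (∏ t, (if t = s then f (x t) else 1)) = f (x s) := by
    intro x
    rw [Finset.prod_eq_single s (fun b _ hb => if_neg hb) (by simp)]
    simp
  have h2 : (∏ t, ∑' y, p y * (if t = s then f y else 1)) = ∑' y, p y * f y := by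
    rw [Finset.prod_eq_single s (fun b _ hb => by simp [if_neg hb, hp]) (by simp)]
    simp
  rw [← h2, ← h]
  exact tsum_congr fun x => by rw [h1]

/-- ENNReal marginal: two marked coordinates. -/
lemma marg_two (n : ℕ) {s t : Fin n} (hst : s ≠ t) (f g : X → ℝ≥0∞) :
    ∑' x : Fin n → X, Lam p n x * (f (x s) * g (x t)) =
      (∑' y, p y * f y) * (∑' y, p y * g y) := by
  have h := marked p n (fun u y => if u = s then f y else if u = t then g y else 1)
  have h1 : ∀ x : Fin n → X,
      (∏ u, (if u = s then f (x u) else if u = t then g (x u) else 1)) = f (x s) * g (x t) := by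
    intro x
    rw [prod_pair_eq hst _ (fun u h1 h2 => by simp [if_neg h1, if_neg h2])]
    simp [if_neg hst.symm, if_neg hst]
  have h2 : (∏ u, ∑' y, p y * (if u = s then f y else if u = t then g y else 1)) =
      (∑' y, p y * f y) * (∑' y, p y * g y) := by
    rw [prod_pair_eq hst _ (fun u h1 h2 => by simp [if_neg h1, if_neg h2, hp])]
    simp [if_neg hst.symm, if_neg hst]
  rw [← h2, ← h]
  exact tsum_congr fun x => by rw [h1]

/-- Real marginal: one marked coordinate, nonneg bounded function. -/
lemma marg_one_real (n : ℕ) (s : Fin n) (r : X → ℝ) (hr0 : ∀ y, 0 ≤ r y) {C : ℝ}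
    (hrC : ∀ y, r y ≤ C) :
    ∑' x : Fin n → X, nu p n x * r (x s) = ∑' y, pr p y * r y := by
  have he : ∑' x : Fin n → X, Lam p n x * ENNReal.ofReal (r (x s))
      = ∑' y, p y * ENNReal.ofReal (r y) := marg_one p hp n s (fun y => ENNReal.ofReal (r y))
  have hterm : ∀ x : Fin n → X, Lam p n x * ENNReal.ofReal (r (x s))
      = ENNReal.ofReal (nu p n x * r (x s)) := fun x => by
    rw [ENNReal.ofReal_mul (nu_nonneg p hp n x), ofReal_nu p hp]
  have hterm' : ∀ y : X, p y * ENNReal.ofReal (r y) = ENNReal.ofReal (pr p y * r y) := fun y => by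
    rw [ENNReal.ofReal_mul (pr_nonneg p hp y), ofReal_pr p hp]
  rw [tsum_congr hterm, tsum_congr hterm'] at he
  have hs1 : Summable fun x : Fin n → X => nu p n x * r (x s) :=
    summable_nu_mul p hp n (h := fun x => r (x s)) (C := C)
      (fun x => by rw [abs_of_nonneg (hr0 (x s))]; exact hrC (x s))
  have hs2 : Summable fun y => pr p y * r y := by
    have hprs : Summable (pr p) := ENNReal.summable_toReal (by rw [hp]; exact ENNReal.one_ne_top)
    apply Summable.of_nonneg_of_le (fun y => mul_nonneg (pr_nonneg p hp y) (hr0 y))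
      (fun y => ?_) (hprs.mul_left C)
    calc pr p y * r y ≤ pr p y * C := mul_le_mul_of_nonneg_left (hrC y) (pr_nonneg p hp y)
      _ = C * pr p y := mul_comm _ _
  rw [← ENNReal.ofReal_tsum_of_nonneg (fun x => mul_nonneg (nu_nonneg p hp n x) (hr0 (x s))) hs1,
      ← ENNReal.ofReal_tsum_of_nonneg (fun y => mul_nonneg (pr_nonneg p hp y) (hr0 y)) hs2] at he
  exact (ENNReal.ofReal_eq_ofReal_iff
    (tsum_nonneg fun x => mul_nonneg (nu_nonneg p hp n x) (hr0 (x s)))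
    (tsum_nonneg fun y => mul_nonneg (pr_nonneg p hp y) (hr0 y))).mp he


/-- Real marginal: two marked coordinates. -/
lemma marg_two_real (n : ℕ) {s t : Fin n} (hst : s ≠ t) (r q : X → ℝ)
    (hr0 : ∀ y, 0 ≤ r y) {C : ℝ} (hrC : ∀ y, r y ≤ C)
    (hq0 : ∀ y, 0 ≤ q y) {D : ℝ} (hqD : ∀ y, q y ≤ D) :
    ∑' x : Fin n → X, nu p n x * (r (x s) * q (x t)) =
      (∑' y, pr p y * r y) * (∑' y, pr p y * q y) := by
  have he := marg_two p hp n hst (fun y => ENNReal.ofReal (r y)) (fun y => ENNReal.ofReal (q y))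
  have hterm : ∀ x : Fin n → X,
      Lam p n x * (ENNReal.ofReal (r (x s)) * ENNReal.ofReal (q (x t)))
      = ENNReal.ofReal (nu p n x * (r (x s) * q (x t))) := fun x => by
    rw [← ENNReal.ofReal_mul (hr0 (x s)),
      ENNReal.ofReal_mul (p := nu p n x) (nu_nonneg p hp n x), ofReal_nu p hp]
  have hterm' : ∀ (w : X → ℝ) (hw : ∀ y, 0 ≤ w y) (y : X),
      p y * ENNReal.ofReal (w y) = ENNReal.ofReal (pr p y * w y) := fun w hw y => by
    rw [ENNReal.ofReal_mul (pr_nonneg p hp y), ofReal_pr p hp]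
  rw [tsum_congr hterm, tsum_congr (hterm' r hr0), tsum_congr (hterm' q hq0)] at he
  have hs1 : Summable fun x : Fin n → X => nu p n x * (r (x s) * q (x t)) := by
    apply summable_nu_mul p hp n (h := fun x => r (x s) * q (x t)) (C := |C| * |D|)
    intro x
    rw [abs_mul, abs_of_nonneg (hr0 (x s)), abs_of_nonneg (hq0 (x t))]
    exact mul_le_mul ((hrC (x s)).trans (le_abs_self C))
      ((hqD (x t)).trans (le_abs_self D)) (hq0 (x t)) (abs_nonneg _)
  have hprs : Summable (pr p) := ENNReal.summable_toReal (by rw [hp]; exact ENNReal.one_ne_top)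
  have hs2 : ∀ (w : X → ℝ) (hw0 : ∀ y, 0 ≤ w y) (D' : ℝ) (hwD : ∀ y, w y ≤ D'),
      Summable fun y => pr p y * w y := fun w hw0 D' hwD => by
    apply Summable.of_nonneg_of_le (fun y => mul_nonneg (pr_nonneg p hp y) (hw0 y))
      (fun y => ?_) (hprs.mul_left D')
    calc pr p y * w y ≤ pr p y * D' := mul_le_mul_of_nonneg_left (hwD y) (pr_nonneg p hp y)
      _ = D' * pr p y := mul_comm _ _
  rw [← ENNReal.ofReal_tsum_of_nonneg
        (fun x => mul_nonneg (nu_nonneg p hp n x) (mul_nonneg (hr0 (x s)) (hq0 (x t)))) hs1,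
      ← ENNReal.ofReal_tsum_of_nonneg (fun y => mul_nonneg (pr_nonneg p hp y) (hr0 y))
        (hs2 r hr0 C hrC),
      ← ENNReal.ofReal_tsum_of_nonneg (fun y => mul_nonneg (pr_nonneg p hp y) (hq0 y))
        (hs2 q hq0 D hqD),
      ← ENNReal.ofReal_mul (tsum_nonneg fun y => mul_nonneg (pr_nonneg p hp y) (hr0 y))] at he
  exact (ENNReal.ofReal_eq_ofReal_iff
    (tsum_nonneg fun x => mul_nonneg (nu_nonneg p hp n x) (mul_nonneg (hr0 (x s)) (hq0 (x t))))
    (mul_nonneg (tsum_nonneg fun y => mul_nonneg (pr_nonneg p hp y) (hr0 y))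
      (tsum_nonneg fun y => mul_nonneg (pr_nonneg p hp y) (hq0 y)))).mp he


section G
variable (g : X → ℝ) (M : ℝ) (hg0 : ∀ y, 0 ≤ g y) (hgM : ∀ y, g y ≤ M) (hM : 0 ≤ M)

/-- Sum of `g` along the coordinates. -/
def Sg (n : ℕ) (x : Fin n → X) : ℝ := ∑ t, g (x t)

include hg0 hgM hM

lemma abs_g_le (y : X) : |g y| ≤ M := by rw [abs_of_nonneg (hg0 y)]; exact hgM y

lemma abs_Sg_le (n : ℕ) (x : Fin n → X) : |Sg g n x| ≤ n * M := by
  calc |Sg g n x| ≤ ∑ t, |g (x t)| := Finset.abs_sum_le_sum_abs _ _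
    _ ≤ ∑ _t : Fin n, M := Finset.sum_le_sum fun t _ => abs_g_le p hp g M hg0 hgM hM (x t)
    _ = n * M := by simp [mul_comm]

lemma E_coord (n : ℕ) (s : Fin n) :
    ∑' x : Fin n → X, nu p n x * g (x s) = ∑' y, pr p y * g y :=
  marg_one_real p hp n s g hg0 hgM

lemma E_sq (n : ℕ) (s : Fin n) :
    ∑' x : Fin n → X, nu p n x * (g (x s))^2 = ∑' y, pr p y * (g y)^2 :=
  marg_one_real p hp n s (fun y => (g y)^2) (fun y => sq_nonneg _)
    (C := M^2) (fun y => pow_le_pow_left₀ (hg0 y) (hgM y) 2)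

lemma E_S (n : ℕ) :
    ∑' x : Fin n → X, nu p n x * Sg g n x = n * ∑' y, pr p y * g y := by
  have h1 : ∀ x : Fin n → X, nu p n x * Sg g n x = ∑ t, nu p n x * g (x t) := fun x =>
    Finset.mul_sum _ _ _
  rw [tsum_congr h1, Summable.tsum_finsetSum (fun t _ => summable_nu_mul p hp n (C := M)
    (fun x => abs_g_le p hp g M hg0 hgM hM (x t)))]
  simp only [E_coord p hp g M hg0 hgM hM n]
  rw [Finset.sum_const, Finset.card_univ, Fintype.card_fin, nsmul_eq_mul]

lemma E_S2 (n : ℕ) :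
    ∑' x : Fin n → X, nu p n x * (Sg g n x)^2 =
      n * (∑' y, pr p y * (g y)^2) + ((n:ℝ)^2 - n) * (∑' y, pr p y * g y)^2 := by
  set μ := ∑' y, pr p y * g y with hμ
  set μ₂ := ∑' y, pr p y * (g y)^2 with hμ₂
  have h1 : ∀ x : Fin n → X, nu p n x * (Sg g n x)^2
      = ∑ s, ∑ t, nu p n x * (g (x s) * g (x t)) := by
    intro x
    rw [sq, Sg, Finset.sum_mul_sum]
    rw [Finset.mul_sum]
    exact Finset.sum_congr rfl fun s _ => Finset.mul_sum _ _ _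
  have hsum2 : ∀ s t : Fin n, Summable fun x : Fin n → X => nu p n x * (g (x s) * g (x t)) := by
    intro s t
    apply summable_nu_mul p hp n (C := M * M)
    intro x
    rw [abs_mul]
    exact mul_le_mul (abs_g_le p hp g M hg0 hgM hM (x s)) (abs_g_le p hp g M hg0 hgM hM (x t))
      (abs_nonneg _) hM
  have hsum1 : ∀ s : Fin n, Summable fun x : Fin n → X =>
      ∑ t, nu p n x * (g (x s) * g (x t)) := fun s => summable_sum fun t _ => hsum2 s t
  rw [tsum_congr h1, Summable.tsum_finsetSum (fun s _ => hsum1 s)]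
  have h2 : ∀ s : Fin n, (∑' x : Fin n → X, ∑ t, nu p n x * (g (x s) * g (x t)))
      = ∑ t, ∑' x : Fin n → X, nu p n x * (g (x s) * g (x t)) := fun s =>
    Summable.tsum_finsetSum (fun t _ => hsum2 s t)
  have h3 : ∀ s t : Fin n, (∑' x : Fin n → X, nu p n x * (g (x s) * g (x t)))
      = if s = t then μ₂ else μ^2 := by
    intro s t
    by_cases h : s = t
    · subst h
      rw [if_pos rfl, hμ₂, ← E_sq p hp g M hg0 hgM hM n s]
      exact tsum_congr fun x => by rw [← sq]
    · rw [if_neg h, hμ, sq]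
      exact marg_two_real p hp n h g g hg0 hgM hg0 hgM
  have h4 : ∀ s : Fin n, (∑ t, if s = t then μ₂ else μ^2) = μ₂ + ((n:ℝ) - 1) * μ^2 := by
    intro s
    have : ∀ t : Fin n, (if s = t then μ₂ else μ^2)
        = μ^2 + (if s = t then μ₂ - μ^2 else 0) := by
      intro t; by_cases h : s = t <;> simp [h]
    rw [Finset.sum_congr rfl fun t _ => this t, Finset.sum_add_distrib,
      Finset.sum_ite_eq _ s, if_pos (Finset.mem_univ s)]
    simp [Finset.card_univ]
    ring
  calc (∑ s : Fin n, ∑' x : Fin n → X, ∑ t, nu p n x * (g (x s) * g (x t)))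
      = ∑ s : Fin n, (μ₂ + ((n:ℝ) - 1) * μ^2) := by
        refine Finset.sum_congr rfl fun s _ => ?_
        rw [h2 s, Finset.sum_congr rfl fun t _ => h3 s t, h4 s]
    _ = n * μ₂ + ((n:ℝ)^2 - n) * μ^2 := by
        rw [Finset.sum_const, Finset.card_univ, Fintype.card_fin, nsmul_eq_mul]
        ring

lemma E_var (n : ℕ) :
    ∑' x : Fin n → X, nu p n x * (Sg g n x - n * (∑' y, pr p y * g y))^2 =
      n * (∑' y, pr p y * (g y)^2) - n * (∑' y, pr p y * g y)^2 := by
  set μ := ∑' y, pr p y * g y with hμ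
  set μ₂ := ∑' y, pr p y * (g y)^2 with hμ₂
  have heq : ∀ x : Fin n → X, nu p n x * (Sg g n x - n * μ)^2
      = (nu p n x * (Sg g n x)^2 - (2*(n*μ)) * (nu p n x * Sg g n x))
        + ((n*μ)^2) * nu p n x := by intro x; ring
  have S1 : Summable fun x : Fin n → X => nu p n x * (Sg g n x)^2 :=
    summable_nu_mul p hp n (C := (n*M)^2) (fun x => by
      rw [abs_of_nonneg (sq_nonneg _), ← sq_abs]
      exact pow_le_pow_left₀ (abs_nonneg _) (abs_Sg_le p hp g M hg0 hgM hM n x) 2)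
  have S2 : Summable fun x : Fin n → X => nu p n x * Sg g n x :=
    summable_nu_mul p hp n (C := n*M) (abs_Sg_le p hp g M hg0 hgM hM n)
  have S3 : Summable (nu p n) := summable_nu p hp n
  rw [tsum_congr heq, Summable.tsum_add (Summable.sub S1 (S2.mul_left _)) (S3.mul_left _),
    Summable.tsum_sub S1 (S2.mul_left _), tsum_mul_left, tsum_mul_left,
    E_S2 p hp g M hg0 hgM hM n, E_S p hp g M hg0 hgM hM n, tsum_nu p hp n]
  ring


lemma chebyshev (n : ℕ) (δ : ℝ) (hδ : 0 < δ) (hn : 0 < n) :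
    ∑' x : {x : Fin n → X // (n:ℝ)*δ ≤ |Sg g n x - n * (∑' y, pr p y * g y)|},
      Lam p n x ≤ ENNReal.ofReal ((∑' y, pr p y * (g y)^2) / (n * δ^2)) := by
  set μ := ∑' y, pr p y * g y with hμ
  set μ₂ := ∑' y, pr p y * (g y)^2 with hμ₂
  have hμ₂0 : 0 ≤ μ₂ := tsum_nonneg fun y => mul_nonneg (pr_nonneg p hp y) (sq_nonneg _)
  set E : Set (Fin n → X) := {x | (n:ℝ)*δ ≤ |Sg g n x - n * μ|} with hE
  have habsb : ∀ x : Fin n → X, |Sg g n x - (n:ℝ) * μ| ≤ n*M + |(n:ℝ)*μ| := by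
    intro x
    calc |Sg g n x - (n:ℝ)*μ| ≤ |Sg g n x| + |(n:ℝ)*μ| := abs_sub _ _
      _ ≤ n*M + |(n:ℝ)*μ| := add_le_add_left (abs_Sg_le p hp g M hg0 hgM hM n x) _
  have Svar : Summable fun x : Fin n → X => nu p n x * (Sg g n x - n * μ)^2 := by
    apply summable_nu_mul p hp n (C := (n*M + |(n:ℝ)*μ|)^2)
    intro x
    rw [abs_of_nonneg (sq_nonneg _), ← sq_abs]
    exact pow_le_pow_left₀ (abs_nonneg _) (habsb x) 2
  have key1 : ∀ x ∈ E, ENNReal.ofReal ((n*δ)^2) * Lam p n x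
      ≤ ENNReal.ofReal (nu p n x * (Sg g n x - n * μ)^2) := by
    intro x hx
    rw [← ofReal_nu p hp, ← ENNReal.ofReal_mul (sq_nonneg ((n:ℝ)*δ))]
    apply ENNReal.ofReal_le_ofReal
    have h2 : ((n:ℝ)*δ)^2 ≤ (Sg g n x - n*μ)^2 := by
      rw [← sq_abs (Sg g n x - n*μ)]
      exact pow_le_pow_left₀ (by positivity) hx 2
    calc ((n:ℝ)*δ)^2 * nu p n x ≤ (Sg g n x - n*μ)^2 * nu p n x :=
          mul_le_mul_of_nonneg_right h2 (nu_nonneg p hp n x)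
      _ = nu p n x * (Sg g n x - n*μ)^2 := mul_comm _ _
  have key2 : ENNReal.ofReal (((n:ℝ)*δ)^2) * ∑' x : E, Lam p n x
      ≤ ENNReal.ofReal ((n:ℝ) * μ₂) := by
    rw [← ENNReal.tsum_mul_left]
    calc (∑' x : E, ENNReal.ofReal (((n:ℝ)*δ)^2) * Lam p n x)
        ≤ ∑' x : E, ENNReal.ofReal (nu p n x * (Sg g n x - n * μ)^2) :=
          ENNReal.tsum_le_tsum fun x => key1 x x.2
      _ = ∑' x : Fin n → X, E.indicator (fun x => ENNReal.ofReal
            (nu p n x * (Sg g n x - n * μ)^2)) x := by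
          exact _root_.tsum_subtype E (fun x => ENNReal.ofReal (nu p n x * (Sg g n x - ↑n * μ) ^ 2))
      _ ≤ ∑' x : Fin n → X, ENNReal.ofReal (nu p n x * (Sg g n x - n * μ)^2) :=
          ENNReal.tsum_le_tsum fun x => Set.indicator_le_self _ _ x
      _ = ENNReal.ofReal (∑' x : Fin n → X, nu p n x * (Sg g n x - n * μ)^2) :=
          (ENNReal.ofReal_tsum_of_nonneg
            (fun x => mul_nonneg (nu_nonneg p hp n x) (sq_nonneg _)) Svar).symm
      _ = ENNReal.ofReal ((n:ℝ) * μ₂ - n * μ^2) := by rw [E_var p hp g M hg0 hgM hM n]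
      _ ≤ ENNReal.ofReal ((n:ℝ) * μ₂) := ENNReal.ofReal_le_ofReal
          (sub_le_self _ (by positivity))
  have hpos : (0:ℝ) < ((n:ℝ)*δ)^2 := by positivity
  have hne0 : ENNReal.ofReal (((n:ℝ)*δ)^2) ≠ 0 := by
    rw [Ne, ENNReal.ofReal_eq_zero, not_le]; exact hpos
  have hnetop : ENNReal.ofReal (((n:ℝ)*δ)^2) ≠ ⊤ := ENNReal.ofReal_ne_top
  have hdiv : (∑' x : E, Lam p n x)
      ≤ ENNReal.ofReal ((n:ℝ) * μ₂) / ENNReal.ofReal (((n:ℝ)*δ)^2) :=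
    (ENNReal.le_div_iff_mul_le (Or.inl hne0) (Or.inl hnetop)).mpr
      (by rw [mul_comm]; exact key2)
  have heq : ENNReal.ofReal ((n:ℝ) * μ₂) / ENNReal.ofReal (((n:ℝ)*δ)^2)
      = ENNReal.ofReal (μ₂ / (n * δ^2)) := by
    rw [← ENNReal.ofReal_div_of_pos hpos]
    congr 1
    rw [div_eq_div_iff (by positivity) (by positivity)]
    ring
  exact hdiv.trans heq.le

end G

omit hp in
lemma tsum_subset_union {α : Type*} (f : α → ℝ≥0∞) (A B C : Set α) (h : A ⊆ B ∪ C) :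
    ∑' x : A, f x ≤ (∑' x : B, f x) + ∑' x : C, f x := by
  rw [_root_.tsum_subtype A f, _root_.tsum_subtype B f, _root_.tsum_subtype C f,
    ← ENNReal.tsum_add]
  apply ENNReal.tsum_le_tsum
  intro x
  by_cases hx : x ∈ A
  · rw [Set.indicator_of_mem hx]
    rcases h hx with hB | hC
    · exact le_add_right (le_of_eq (Set.indicator_of_mem hB f).symm)
    · exact le_add_left (le_of_eq (Set.indicator_of_mem hC f).symm)
  · simp [Set.indicator_of_notMem hx]

lemma markov (n : ℕ) (e : X → ℝ) (he0 : ∀ y, 0 ≤ e y) (hse : Summable fun y => pr p y * e y)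
    (a : ℝ) (ha : 0 < a) :
    ∑' x : {x : Fin n → X // a ≤ Sg e n x}, Lam p n x
      ≤ ENNReal.ofReal ((n * ∑' y, pr p y * e y) / a) := by
  set η := ∑' y, pr p y * e y with hη
  have hη0 : 0 ≤ η := tsum_nonneg fun y => mul_nonneg (pr_nonneg p hp y) (he0 y)
  have hmean : ∑' x : Fin n → X, Lam p n x * ENNReal.ofReal (Sg e n x)
      = n * ENNReal.ofReal η := by
    have h1 : ∀ x : Fin n → X, Lam p n x * ENNReal.ofReal (Sg e n x)
        = ∑ t, Lam p n x * ENNReal.ofReal (e (x t)) := by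
      intro x
      rw [Sg, ENNReal.ofReal_sum_of_nonneg (fun t _ => he0 (x t)), Finset.mul_sum]
    rw [tsum_congr h1, Summable.tsum_finsetSum (fun t _ => ENNReal.summable)]
    have h2 : ∀ t : Fin n, (∑' x : Fin n → X, Lam p n x * ENNReal.ofReal (e (x t)))
        = ENNReal.ofReal η := by
      intro t
      rw [marg_one p hp n t (fun y => ENNReal.ofReal (e y))]
      have h3 : ∀ y : X, p y * ENNReal.ofReal (e y) = ENNReal.ofReal (pr p y * e y) := fun y => by
        rw [ENNReal.ofReal_mul (pr_nonneg p hp y), ofReal_pr p hp]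
      rw [tsum_congr h3, ← ENNReal.ofReal_tsum_of_nonneg
        (fun y => mul_nonneg (pr_nonneg p hp y) (he0 y)) hse]
    simp [h2]
  set E : Set (Fin n → X) := {x | a ≤ Sg e n x} with hE
  have key : ENNReal.ofReal a * ∑' x : E, Lam p n x ≤ ENNReal.ofReal (n * η) := by
    rw [← ENNReal.tsum_mul_left]
    calc (∑' x : E, ENNReal.ofReal a * Lam p n x)
        ≤ ∑' x : E, Lam p n x * ENNReal.ofReal (Sg e n ↑x) := by
          apply ENNReal.tsum_le_tsum
          intro x
          rw [mul_comm]
          exact mul_le_mul_right (ENNReal.ofReal_le_ofReal x.2) _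
      _ = ∑' x : Fin n → X, E.indicator (fun x => Lam p n x * ENNReal.ofReal (Sg e n x)) x := by
          exact _root_.tsum_subtype E (fun x => Lam p n x * ENNReal.ofReal (Sg e n x))
      _ ≤ ∑' x : Fin n → X, Lam p n x * ENNReal.ofReal (Sg e n x) :=
          ENNReal.tsum_le_tsum fun x => Set.indicator_le_self _ _ x
      _ = n * ENNReal.ofReal η := hmean
      _ = ENNReal.ofReal (n * η) := by
          rw [ENNReal.ofReal_mul (by positivity : (0:ℝ) ≤ (n:ℝ)), ENNReal.ofReal_natCast]
  have hne0 : ENNReal.ofReal a ≠ 0 := by simp [ENNReal.ofReal_eq_zero, not_le, ha]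
  have hdiv : (∑' x : E, Lam p n x) ≤ ENNReal.ofReal (n * η) / ENNReal.ofReal a :=
    (ENNReal.le_div_iff_mul_le (Or.inl hne0) (Or.inl ENNReal.ofReal_ne_top)).mpr
      (by rw [mul_comm]; exact key)
  rwa [← ENNReal.ofReal_div_of_pos ha] at hdiv

/-- Self-information of a letter. -/
noncomputable def info (y : X) : ℝ := Real.log (1 / pr p y)

omit hp in
lemma info_nonneg' (hle : pr p y ≤ 1) : 0 ≤ info p y := by
  rcases eq_or_lt_of_le (ENNReal.toReal_nonneg : 0 ≤ pr p y) with h | h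
  · have h' : pr p y = 0 := h.symm
    rw [info, h']; norm_num
  · exact Real.log_nonneg (one_le_one_div h hle)

lemma info_nonneg (y : X) : 0 ≤ info p y := info_nonneg' p (pr_le_one p hp y)

lemma log_nu (n : ℕ) (x : Fin n → X) (hx : ∀ t, pr p (x t) ≠ 0) :
    Real.log (1 / nu p n x) = Sg (info p) n x := by
  rw [one_div, Real.log_inv, nu, Real.log_prod (fun t _ => hx t)]
  rw [Sg, ← Finset.sum_neg_distrib]
  exact Finset.sum_congr rfl fun t _ => by rw [info, one_div, Real.log_inv]

/-- The asymptotic equipartition property for one i.i.d. component. -/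
lemma aep (h : ℝ) (hsum : HasSum (fun y => pr p y * info p y) h) (ε ε₀ : ℝ)
    (hε : 0 < ε) (hε₀ : 0 < ε₀) :
    ∃ n₀ : ℕ, 0 < n₀ ∧ ∀ n ≥ n₀,
      ∑' x : {x : Fin n → X // ¬ |Sg (info p) n x - n * h| ≤ n * ε}, Lam p n x
        ≤ ENNReal.ofReal ε₀ := by
  classical
  set q : X → ℝ := fun y => pr p y * info p y with hq
  have hq0 : ∀ y, 0 ≤ q y := fun y => mul_nonneg (pr_nonneg p hp y) (info_nonneg p hp y)
  have hqs : Summable q := hsum.summable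
  have hqt : ∑' y, q y = h := hsum.tsum_eq
  set θ := min (ε/2) (ε*ε₀/8) with hθ
  have hθ0 : 0 < θ := lt_min (by positivity) (by positivity)
  -- find a finite set carrying most of the entropy
  have hF : ∃ F : Finset X, h - θ < ∑ y ∈ F, q y := by
    have : ∀ᶠ F in (Filter.atTop : Filter (Finset X)), h - θ < ∑ y ∈ F, q y :=
      hsum.eventually (eventually_gt_nhds (by linarith))
    exact this.exists
  obtain ⟨F, hFq⟩ := hF
  set M : ℝ := ∑ y ∈ F, info p y with hM
  have hM0 : 0 ≤ M := Finset.sum_nonneg fun y _ => info_nonneg p hp y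
  have hMy : ∀ y ∈ F, info p y ≤ M :=
    fun y hy => Finset.single_le_sum (fun z _ => info_nonneg p hp z) hy
  set g : X → ℝ := fun y => min (info p y) M with hg
  have hg0 : ∀ y, 0 ≤ g y := fun y => le_min (info_nonneg p hp y) hM0
  have hgM : ∀ y, g y ≤ M := fun y => min_le_right _ _
  have hgi : ∀ y, g y ≤ info p y := fun y => min_le_left _ _
  have hsg : Summable fun y => pr p y * g y :=
    Summable.of_nonneg_of_le (fun y => mul_nonneg (pr_nonneg p hp y) (hg0 y))
      (fun y => mul_le_mul_of_nonneg_left (hgi y) (pr_nonneg p hp y)) hqs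
  set μ := ∑' y, pr p y * g y with hμ
  have hμh : μ ≤ h := by
    rw [← hqt]
    exact Summable.tsum_le_tsum (fun y => mul_le_mul_of_nonneg_left (hgi y) (pr_nonneg p hp y)) hsg hqs
  have hμlb : h - θ < μ := by
    have h1 : ∑ y ∈ F, q y = ∑ y ∈ F, pr p y * g y := by
      refine Finset.sum_congr rfl fun y hy => ?_
      rw [hq, hg]
      simp [min_eq_left (hMy y hy)]
    have h2 : ∑ y ∈ F, pr p y * g y ≤ μ :=
      Summable.sum_le_tsum F (fun y _ => mul_nonneg (pr_nonneg p hp y) (hg0 y)) hsg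
    linarith [hFq, h1 ▸ hFq]
  set e : X → ℝ := fun y => info p y - g y with he
  have he0 : ∀ y, 0 ≤ e y := fun y => sub_nonneg.mpr (hgi y)
  have hes : Summable fun y => pr p y * e y := by
    have : (fun y => pr p y * e y) = fun y => q y - pr p y * g y := by
      funext y; rw [he, hq]; ring
    rw [this]
    exact hqs.sub hsg
  have hηval : ∑' y, pr p y * e y = h - μ := by
    have : (fun y => pr p y * e y) = fun y => q y - pr p y * g y := by
      funext y; rw [he, hq]; ring
    rw [this, Summable.tsum_sub hqs hsg, hqt, hμ]
  have hη0 : 0 ≤ h - μ := sub_nonneg.mpr hμh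
  have hηθ : h - μ < θ := by linarith
  set μ₂ := ∑' y, pr p y * (g y)^2 with hμ₂
  have hμ₂0 : 0 ≤ μ₂ := tsum_nonneg fun y => mul_nonneg (pr_nonneg p hp y) (sq_nonneg _)
  -- choose n₀
  obtain ⟨N, hN⟩ := exists_nat_gt (μ₂ / ((ε/2)^2 * (ε₀/2)))
  refine ⟨N + 1, Nat.succ_pos N, fun n hn => ?_⟩
  have hn0 : 0 < n := lt_of_lt_of_le (Nat.succ_pos N) hn
  have hnr : (0:ℝ) < n := by exact_mod_cast hn0
  have hnN : μ₂ / ((ε/2)^2 * (ε₀/2)) < (n:ℝ) := by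
    calc μ₂ / ((ε/2)^2 * (ε₀/2)) < N := hN
      _ ≤ (n:ℝ) - 1 := by
        have : (N:ℝ) + 1 ≤ n := by exact_mod_cast hn
        linarith
      _ ≤ (n:ℝ) := by linarith
  -- the three events
  set B1 : Set (Fin n → X) := {x | (n:ℝ)*(ε/2) ≤ |Sg g n x - n * μ|} with hB1
  set B2 : Set (Fin n → X) := {x | (n:ℝ)*(ε/2) ≤ Sg e n x} with hB2
  set A : Set (Fin n → X) := {x | ¬ |Sg (info p) n x - n * h| ≤ n * ε} with hA
  have hsub : A ⊆ B1 ∪ B2 := by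
    intro x hx
    by_contra hcon
    rw [Set.mem_union] at hcon
    push_neg at hcon
    obtain ⟨h1, h2⟩ := hcon
    rw [hB1, Set.mem_setOf_eq, not_le] at h1
    rw [hB2, Set.mem_setOf_eq, not_le] at h2
    apply hx
    have hdecomp : Sg (info p) n x = Sg g n x + Sg e n x := by
      rw [Sg, Sg, Sg, ← Finset.sum_add_distrib]
      exact Finset.sum_congr rfl fun t _ => by rw [he]; ring
    have hSe0 : 0 ≤ Sg e n x := Finset.sum_nonneg fun t _ => he0 (x t)
    have hnh : (n:ℝ) * h = n * μ + n * (h - μ) := by ring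
    have hbound : |Sg (info p) n x - n * h| ≤ |Sg g n x - n*μ| + |Sg e n x - n*(h-μ)| := by
      rw [hdecomp, hnh]
      calc |Sg g n x + Sg e n x - (n * μ + n * (h - μ))|
          = |(Sg g n x - n*μ) + (Sg e n x - n*(h-μ))| := by ring_nf
        _ ≤ _ := abs_add_le _ _
    have h3 : |Sg e n x - n*(h-μ)| ≤ n * (ε/2) := by
      rw [abs_le]
      constructor
      · have : (n:ℝ)*(h-μ) ≤ n * θ := by
          apply mul_le_mul_of_nonneg_left (le_of_lt hηθ) (le_of_lt hnr)
        have hθε : θ ≤ ε/2 := min_le_left _ _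
        nlinarith
      · nlinarith
    calc |Sg (info p) n x - n * h| ≤ |Sg g n x - n*μ| + |Sg e n x - n*(h-μ)| := hbound
      _ ≤ n * (ε/2) + n * (ε/2) := add_le_add (le_of_lt h1) h3
      _ = n * ε := by ring
  calc (∑' x : A, Lam p n x) ≤ (∑' x : B1, Lam p n x) + ∑' x : B2, Lam p n x :=
        tsum_subset_union (Lam p n) A B1 B2 hsub
    _ ≤ ENNReal.ofReal (ε₀/2) + ENNReal.ofReal (ε₀/2) := by
        gcongr
        · -- Chebyshev
          refine le_trans (chebyshev p hp g M hg0 hgM hM0 n (ε/2) (by positivity) hn0) ?_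
          apply ENNReal.ofReal_le_ofReal
          rw [div_le_iff₀ (by positivity)]
          rw [div_lt_iff₀ (by positivity)] at hnN
          nlinarith
        · -- Markov
          refine le_trans (markov p hp n e he0 hes ((n:ℝ)*(ε/2)) (by positivity)) ?_
          apply ENNReal.ofReal_le_ofReal
          rw [hηval, div_le_iff₀ (by positivity)]
          have hθ2 : θ ≤ ε*ε₀/8 := min_le_right _ _
          nlinarith
    _ = ENNReal.ofReal ε₀ := by
        rw [← ENNReal.ofReal_add (by positivity) (by positivity)]
        norm_num

omit hp in
lemma tsum_subtype_le' {α : Type*} (f : α → ℝ≥0∞) (A : Set α) :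
    ∑' x : A, f x ≤ ∑' x, f x := by
  rw [_root_.tsum_subtype A f]
  exact ENNReal.tsum_le_tsum fun x => Set.indicator_le_self _ _ x

end P

/-- The mixture of i.i.d. sources (local copy, defeq to `mixProd`). -/
noncomputable def mixP {m : ℕ} (w : Fin m → ℝ) (P : Fin m → X → ℝ≥0∞)
    (n : ℕ) (x : Fin n → X) : ℝ≥0∞ :=
  ∑ k, ENNReal.ofReal (w k) * Lam (P k) n x

lemma mixP_tsum {m : ℕ} (w : Fin m → ℝ) (P : Fin m → X → ℝ≥0∞)
    (hw : ∀ k, 0 ≤ w k) (hw1 : ∑ k, w k = 1) (hP : ∀ k, ∑' y, P k y = 1) (n : ℕ) :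
    ∑' x : Fin n → X, mixP w P n x = 1 := by
  unfold mixP
  rw [Summable.tsum_finsetSum (fun k _ => ENNReal.summable)]
  have h1 : ∀ k : Fin m, (∑' x : Fin n → X, ENNReal.ofReal (w k) * Lam (P k) n x)
      = ENNReal.ofReal (w k) := by
    intro k
    rw [ENNReal.tsum_mul_left, tsum_Lam (P k) (hP k) n, mul_one]
  rw [Finset.sum_congr rfl fun k _ => h1 k, ← ENNReal.ofReal_sum_of_nonneg
    (fun k _ => hw k), hw1, ENNReal.ofReal_one]

/-- Mass of component `k` concentrates on the window around `H k`. -/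
lemma Gmass {m : ℕ} (w : Fin m → ℝ) (P : Fin m → X → ℝ≥0∞) (H : Fin m → ℝ)
    (hw : ∀ k, 0 < w k) (hw1 : ∑ k, w k = 1) (hP : ∀ k, ∑' y, P k y = 1)
    (hH : ∀ k, HasSum (fun y => pr (P k) y * info (P k) y) (H k))
    (γ ε₂ : ℝ) (hγ : 0 < γ) (hε₂ : 0 < ε₂) (k : Fin m) :
    ∃ n₁ : ℕ, 0 < n₁ ∧ ∀ n ≥ n₁,
      ∑' x : {y : Fin n → X // ¬ |(1/(n:ℝ)) * Real.log (1/(mixP w P n y).toReal) - H k| ≤ γ},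
        Lam (P k) n x ≤ ENNReal.ofReal ε₂ := by
  classical
  set p : X → ℝ≥0∞ := P k with hpdef
  have hp : ∑' y, p y = 1 := hP k
  set h : ℝ := H k with hhdef
  obtain ⟨n₀, hn₀pos, hn₀⟩ := aep p hp h (hH k) (γ/2) (ε₂/2) (by positivity) (by positivity)
  obtain ⟨N₂, hN₂⟩ := exists_nat_gt ((-Real.log (w k)) / (γ/2))
  obtain ⟨N₃, hN₃⟩ := exists_nat_gt ((-Real.log (ε₂/2)) / (γ/2))
  refine ⟨max n₀ (max (N₂+1) (N₃+1)), lt_of_lt_of_le hn₀pos (le_max_left _ _), fun n hn => ?_⟩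
  have hnn₀ : n ≥ n₀ := le_trans (le_max_left _ _) hn
  have hnN₂ : (N₂:ℝ) + 1 ≤ n := by
    have : N₂ + 1 ≤ n := le_trans (le_trans (le_max_left _ _) (le_max_right n₀ _)) hn
    exact_mod_cast this
  have hnN₃ : (N₃:ℝ) + 1 ≤ n := by
    have : N₃ + 1 ≤ n := le_trans (le_trans (le_max_right _ _) (le_max_right n₀ _)) hn
    exact_mod_cast this
  have hn0 : 0 < n := lt_of_lt_of_le (Nat.succ_pos N₂)
    (le_trans (le_trans (le_max_left _ _) (le_max_right n₀ _)) hn)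
  have hnr : (0:ℝ) < n := by exact_mod_cast hn0
  have hwk : 0 < w k := hw k
  have hlogwk : -Real.log (w k) ≤ (n:ℝ) * (γ/2) := by
    rw [div_lt_iff₀ (by positivity)] at hN₂
    nlinarith
  have hexpsmall : Real.exp (-(n:ℝ)*(γ/2)) ≤ ε₂/2 := by
    have h1 : -Real.log (ε₂/2) < (n:ℝ) * (γ/2) := by
      rw [div_lt_iff₀ (by positivity)] at hN₃
      nlinarith
    have h2 : -(n:ℝ)*(γ/2) < Real.log (ε₂/2) := by linarith
    calc Real.exp (-(n:ℝ)*(γ/2)) ≤ Real.exp (Real.log (ε₂/2)) :=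
          Real.exp_le_exp.mpr (le_of_lt h2)
      _ = ε₂/2 := Real.exp_log (by positivity)
  -- events
  set T : Set (Fin n → X) := {x | |Sg (info p) n x - n * h| ≤ n * (γ/2)} with hT
  set U : Set (Fin n → X) := {x | ENNReal.ofReal (Real.exp (-(n:ℝ)*(h - γ))) < mixP w P n x}
    with hU
  set Z : Set (Fin n → X) := {x | Lam p n x = 0} with hZ
  set A : Set (Fin n → X) :=
    {y | ¬ |(1/(n:ℝ)) * Real.log (1/(mixP w P n y).toReal) - h| ≤ γ} with hA
  have hQle1 : ∀ x : Fin n → X, mixP w P n x ≤ 1 := by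
    intro x
    rw [← mixP_tsum w P (fun j => le_of_lt (hw j)) hw1 hP n]
    exact ENNReal.le_tsum x
  have hQnetop : ∀ x : Fin n → X, mixP w P n x ≠ ⊤ :=
    fun x => ((hQle1 x).trans_lt ENNReal.one_lt_top).ne
  -- main inclusion
  have hsub : A ⊆ Tᶜ ∪ ((U ∩ T ∩ Zᶜ) ∪ Z) := by
    intro x hx
    by_cases hZx : x ∈ Z
    · exact Or.inr (Or.inr hZx)
    by_cases hTx : x ∈ T
    · -- x ∈ T, Λ ≠ 0; show x ∈ U, else contradiction with hx
      refine Or.inr (Or.inl ⟨⟨?_, hTx⟩, hZx⟩)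
      by_contra hUx
      apply hx
      -- basic positivity
      have hLamne : Lam p n x ≠ 0 := hZx
      have hnupos : 0 < nu p n x := by
        rcases (ENNReal.ofReal_eq_zero.not.mp (by rw [ofReal_nu p hp]; exact hLamne)) with h'
        push_neg at h'
        exact h'
      have hprne : ∀ t, pr p (x t) ≠ 0 := fun t =>
        (Finset.prod_ne_zero_iff.mp
          (show (∏ t, pr p (x t)) ≠ 0 from ne_of_gt hnupos)) t (Finset.mem_univ t)
      have hwknu : w k * nu p n x ≤ (mixP w P n x).toReal := by
        have h1 : ENNReal.ofReal (w k * nu p n x) ≤ mixP w P n x := by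
          rw [ENNReal.ofReal_mul (le_of_lt hwk), ofReal_nu p hp]
          exact Finset.single_le_sum (f := fun j => ENNReal.ofReal (w j) * Lam (P j) n x)
            (fun j _ => by positivity) (Finset.mem_univ k)
        calc w k * nu p n x = (ENNReal.ofReal (w k * nu p n x)).toReal :=
              (ENNReal.toReal_ofReal (by positivity)).symm
          _ ≤ (mixP w P n x).toReal := ENNReal.toReal_mono (hQnetop x) h1
      have hQtpos : 0 < (mixP w P n x).toReal := lt_of_lt_of_le (by positivity) hwknu
      have hTx' : |Sg (info p) n x - n * h| ≤ n * (γ/2) := hTx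
      have hSgle : Sg (info p) n x ≤ n * h + n * (γ/2) := by
        have := abs_le.mp hTx'
        linarith [this.2]
      have hSgge : n * h - n * (γ/2) ≤ Sg (info p) n x := by
        have := abs_le.mp hTx'
        linarith [this.1]
      have hlognu : -Real.log (nu p n x) = Sg (info p) n x := by
        rw [← log_nu p hp n x hprne, one_div, Real.log_inv]
      -- upper bound on L
      have hL_upper : Real.log (1/(mixP w P n x).toReal) ≤ (n:ℝ) * (h + γ) := by
        have h1 : Real.log (w k * nu p n x) ≤ Real.log ((mixP w P n x).toReal) :=
          Real.log_le_log (by positivity) hwknu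
        rw [Real.log_mul (ne_of_gt hwk) (ne_of_gt hnupos)] at h1
        rw [one_div, Real.log_inv]
        have h2 : -Real.log ((mixP w P n x).toReal) ≤ -Real.log (w k) - Real.log (nu p n x) := by
          linarith
        calc -Real.log ((mixP w P n x).toReal)
            ≤ -Real.log (w k) + Sg (info p) n x := by rw [← hlognu]; linarith
          _ ≤ (n:ℝ)*(γ/2) + ((n:ℝ) * h + n * (γ/2)) := add_le_add hlogwk hSgle
          _ = (n:ℝ) * (h + γ) := by ring
      -- lower bound on L from ¬U
      have hL_lower : (n:ℝ) * (h - γ) ≤ Real.log (1/(mixP w P n x).toReal) := by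
        rw [hU, Set.mem_setOf_eq, not_lt] at hUx
        have h1 : (mixP w P n x).toReal ≤ Real.exp (-(n:ℝ)*(h-γ)) := by
          calc (mixP w P n x).toReal ≤ (ENNReal.ofReal (Real.exp (-(n:ℝ)*(h-γ)))).toReal :=
                ENNReal.toReal_mono ENNReal.ofReal_ne_top hUx
            _ = Real.exp (-(n:ℝ)*(h-γ)) := ENNReal.toReal_ofReal (Real.exp_nonneg _)
        have h2 : Real.log ((mixP w P n x).toReal) ≤ -(n:ℝ)*(h-γ) := by
          calc Real.log ((mixP w P n x).toReal) ≤ Real.log (Real.exp (-(n:ℝ)*(h-γ))) :=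
                Real.log_le_log hQtpos h1
            _ = -(n:ℝ)*(h-γ) := Real.log_exp _
        rw [one_div, Real.log_inv]
        linarith
      have hinv : (0:ℝ) < 1/(n:ℝ) := by positivity
      have hid1 : (1/(n:ℝ)) * ((n:ℝ)*(h-γ)) = h - γ := by field_simp
      have hid2 : (1/(n:ℝ)) * ((n:ℝ)*(h+γ)) = h + γ := by field_simp
      rw [abs_le]
      constructor
      · linarith [mul_le_mul_of_nonneg_left hL_lower hinv.le, hid1]
      · linarith [mul_le_mul_of_nonneg_left hL_upper hinv.le, hid2]
    · exact Or.inl hTx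
  -- pointwise bound on U ∩ T ∩ Zᶜ
  have hVp : ∀ x : Fin n → X, x ∈ U ∩ T ∩ Zᶜ →
      Lam p n x ≤ ENNReal.ofReal (Real.exp (-(n:ℝ)*(γ/2))) * mixP w P n x := by
    rintro x ⟨⟨hUx, hTx⟩, hZx⟩
    have hLamne : Lam p n x ≠ 0 := hZx
    have hnupos : 0 < nu p n x := by
      rcases (ENNReal.ofReal_eq_zero.not.mp (by rw [ofReal_nu p hp]; exact hLamne)) with h'
      push_neg at h'
      exact h'
    have hprne : ∀ t, pr p (x t) ≠ 0 := fun t =>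
      (Finset.prod_ne_zero_iff.mp
        (show (∏ t, pr p (x t)) ≠ 0 from ne_of_gt hnupos)) t (Finset.mem_univ t)
    have hlognu : -Real.log (nu p n x) = Sg (info p) n x := by
      rw [← log_nu p hp n x hprne, one_div, Real.log_inv]
    have hTx' : |Sg (info p) n x - n * h| ≤ n * (γ/2) := hTx
    have hSgge : (n:ℝ) * h - n * (γ/2) ≤ Sg (info p) n x := by
      have := abs_le.mp hTx'
      linarith [this.1]
    have h1 : nu p n x ≤ Real.exp (-(n:ℝ)*(h - γ/2)) := by
      rw [← Real.exp_log hnupos]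
      apply Real.exp_le_exp.mpr
      have hlog : Real.log (nu p n x) = -Sg (info p) n x := by linarith [hlognu]
      rw [hlog]
      linarith
    calc Lam p n x = ENNReal.ofReal (nu p n x) := (ofReal_nu p hp n x).symm
      _ ≤ ENNReal.ofReal (Real.exp (-(n:ℝ)*(h - γ/2))) := ENNReal.ofReal_le_ofReal h1
      _ = ENNReal.ofReal (Real.exp (-(n:ℝ)*(γ/2)) * Real.exp (-(n:ℝ)*(h-γ))) := by
          rw [← Real.exp_add]
          ring_nf
      _ = ENNReal.ofReal (Real.exp (-(n:ℝ)*(γ/2))) * ENNReal.ofReal (Real.exp (-(n:ℝ)*(h-γ))) :=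
          ENNReal.ofReal_mul (Real.exp_nonneg _)
      _ ≤ ENNReal.ofReal (Real.exp (-(n:ℝ)*(γ/2))) * mixP w P n x :=
          mul_le_mul_right (le_of_lt hUx) _
  have hZ0 : ∑' x : Z, Lam p n x = 0 := by
    have hz : ∀ x : Z, Lam p n (x : Fin n → X) = 0 := fun x => x.2
    rw [tsum_congr hz]
    exact tsum_zero
  have hTc : ∑' x : ↥(Tᶜ), Lam p n x ≤ ENNReal.ofReal (ε₂/2) := hn₀ n hnn₀
  have hV : ∑' x : ↥(U ∩ T ∩ Zᶜ), Lam p n x ≤ ENNReal.ofReal (ε₂/2) := by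
    calc (∑' x : ↥(U ∩ T ∩ Zᶜ), Lam p n x)
        ≤ ∑' x : ↥(U ∩ T ∩ Zᶜ), ENNReal.ofReal (Real.exp (-(n:ℝ)*(γ/2))) * mixP w P n x :=
          ENNReal.tsum_le_tsum fun x => hVp x x.2
      _ = ENNReal.ofReal (Real.exp (-(n:ℝ)*(γ/2))) * ∑' x : ↥(U ∩ T ∩ Zᶜ), mixP w P n x :=
          ENNReal.tsum_mul_left
      _ ≤ ENNReal.ofReal (Real.exp (-(n:ℝ)*(γ/2))) * 1 := by
          apply mul_le_mul_right
          rw [← mixP_tsum w P (fun j => le_of_lt (hw j)) hw1 hP n]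
          exact tsum_subtype_le' (mixP w P n) _
      _ = ENNReal.ofReal (Real.exp (-(n:ℝ)*(γ/2))) := mul_one _
      _ ≤ ENNReal.ofReal (ε₂/2) := ENNReal.ofReal_le_ofReal hexpsmall
  calc (∑' x : A, Lam p n x)
      ≤ (∑' x : ↥(Tᶜ), Lam p n x) + ∑' x : ↥((U ∩ T ∩ Zᶜ) ∪ Z), Lam p n x :=
        tsum_subset_union (Lam p n) A (Tᶜ) ((U ∩ T ∩ Zᶜ) ∪ Z) hsub
    _ ≤ (∑' x : ↥(Tᶜ), Lam p n x)
        + ((∑' x : ↥(U ∩ T ∩ Zᶜ), Lam p n x) + ∑' x : Z, Lam p n x) := by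
        gcongr
        exact tsum_subset_union (Lam p n) _ _ _ (by rfl)
    _ ≤ ENNReal.ofReal (ε₂/2) + (ENNReal.ofReal (ε₂/2) + 0) :=
        add_le_add hTc (add_le_add hV (le_of_eq hZ0))
    _ = ENNReal.ofReal ε₂ := by
        rw [add_zero, ← ENNReal.ofReal_add (by positivity) (by positivity)]
        norm_num

omit [Countable X] in
lemma tsum_subtype_mono {f : X → ℝ≥0∞} {A B : Set X} (hAB : A ⊆ B) :
    ∑' x : A, f x ≤ ∑' x : B, f x := by
  rw [_root_.tsum_subtype A f, _root_.tsum_subtype B f]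
  apply ENNReal.tsum_le_tsum
  intro x
  by_cases hx : x ∈ A
  · rw [Set.indicator_of_mem hx, Set.indicator_of_mem (hAB hx)]
  · simp [Set.indicator_of_notMem hx]

end MixAEP

open MixAEP Finset

/-- Concentration of the information spectrum of a mixture on the component
entropies: if `γ > 0` separates the entropies (`H(X_j) - γ > H(X_{j+1}) + γ`),
then for all sufficiently large `n` and each component `i`,
`α_i - 2γ ≤ Pr[|(1/n) log(1/P_{X^n}(X^n)) - H(X_i)| ≤ γ] ≤ α_i + 2γ`. -/
theorem mixture_spectrum_concentration {X : Type*} [Countable X] {m : ℕ}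
    (w : Fin m → ℝ) (P : Fin m → X → ℝ≥0∞) (H : Fin m → ℝ)
    (hw : ∀ k, 0 < w k) (hw1 : ∑ k, w k = 1)
    (hP : ∀ k, ∑' x, P k x = 1)
    (hH : ∀ k, HasSum (fun x => (P k x).toReal * Real.log (1 / (P k x).toReal)) (H k))
    (hanti : StrictAnti H) (γ : ℝ) (hγ : 0 < γ)
    (hgap : ∀ j k : Fin m, j < k → H k + γ < H j - γ) :
    ∃ n₀ : ℕ, ∀ n ≥ n₀, ∀ i : Fin m,
      ENNReal.ofReal (w i - 2 * γ) ≤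
        (∑' x : {y : Fin n → X //
            |(1 / (n : ℝ)) * Real.log (1 / (mixProd w P n y).toReal) - H i| ≤ γ},
          mixProd w P n (x : Fin n → X)) ∧
      (∑' x : {y : Fin n → X //
            |(1 / (n : ℝ)) * Real.log (1 / (mixProd w P n y).toReal) - H i| ≤ γ},
          mixProd w P n (x : Fin n → X)) ≤ ENNReal.ofReal (w i + 2 * γ) := by
  classical
  set ε₂ := min γ 1 with hε₂def
  have hε₂pos : 0 < ε₂ := lt_min hγ one_pos
  have hε₂γ : ε₂ ≤ γ := min_le_left _ _
  have hε₂1 : ε₂ ≤ 1 := min_le_right _ _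
  have hGm : ∀ k : Fin m, ∃ n₁ : ℕ, 0 < n₁ ∧ ∀ n ≥ n₁,
      ∑' x : {y : Fin n → X //
          ¬ |(1/(n:ℝ)) * Real.log (1/(mixP w P n y).toReal) - H k| ≤ γ},
        Lam (P k) n x ≤ ENNReal.ofReal ε₂ :=
    fun k => Gmass w P H hw hw1 hP (fun k => hH k) γ ε₂ hγ hε₂pos k
  choose n₁ hn₁pos hn₁ using hGm
  refine ⟨(Finset.univ.sup n₁) + 1, fun n hn i => ?_⟩
  have hnk : ∀ k, n ≥ n₁ k := fun k =>
    le_trans (le_trans (Finset.le_sup (Finset.mem_univ k)) (Nat.le_succ _)) hn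
  set G : Fin m → Set (Fin n → X) := fun k =>
    {y | |(1/(n:ℝ)) * Real.log (1/(mixProd w P n y).toReal) - H k| ≤ γ} with hG
  have hmass : ∀ k, (∑' x : ↥((G k)ᶜ), Lam (P k) n x) ≤ ENNReal.ofReal ε₂ := fun k =>
    hn₁ k n (hnk k)
  have hLam1 : ∀ k : Fin m, ∑' x : Fin n → X, Lam (P k) n x = 1 :=
    fun k => tsum_Lam (P k) (hP k) n
  -- disjointness of windows
  have hdisj : ∀ k, k ≠ i → G i ⊆ (G k)ᶜ := by
    intro k hk x hxi hxk
    have h1 : |(1/(n:ℝ)) * Real.log (1/(mixProd w P n x).toReal) - H i| ≤ γ := hxi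
    have h2 : |(1/(n:ℝ)) * Real.log (1/(mixProd w P n x).toReal) - H k| ≤ γ := hxk
    have h1' := abs_le.mp h1
    have h2' := abs_le.mp h2
    rcases lt_or_gt_of_ne hk with hlt | hgt
    · have := hgap k i hlt
      linarith [h1'.1, h1'.2, h2'.1, h2'.2]
    · have := hgap i k hgt
      linarith [h1'.1, h1'.2, h2'.1, h2'.2]
  -- decomposition of the mixture mass of G i
  have hsplit : (∑' x : ↥(G i), mixProd w P n (x : Fin n → X))
      = ∑ k, ENNReal.ofReal (w k) * ∑' x : ↥(G i), Lam (P k) n (x : Fin n → X) := by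
    have h1 : ∀ x : ↥(G i), mixProd w P n (x : Fin n → X)
        = ∑ k, ENNReal.ofReal (w k) * Lam (P k) n (x : Fin n → X) := fun x => rfl
    rw [tsum_congr h1, Summable.tsum_finsetSum (fun k _ => ENNReal.summable)]
    exact Finset.sum_congr rfl fun k _ => ENNReal.tsum_mul_left
  have hwi1 : w i ≤ 1 := by
    rw [← hw1]
    exact Finset.single_le_sum (fun j _ => le_of_lt (hw j)) (Finset.mem_univ i)
  constructor
  · -- lower bound
    have hcompl : (∑' x : ↥(G i), Lam (P i) n (x : Fin n → X))
        + (∑' x : ↥((G i)ᶜ), Lam (P i) n (x : Fin n → X)) = 1 := by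
      rw [← hLam1 i]
      exact Summable.tsum_add_tsum_compl ENNReal.summable ENNReal.summable
    have hGi_big : 1 - ENNReal.ofReal ε₂ ≤ ∑' x : ↥(G i), Lam (P i) n (x : Fin n → X) := by
      rw [tsub_le_iff_right]
      calc (1:ℝ≥0∞) = _ + _ := hcompl.symm
        _ ≤ (∑' x : ↥(G i), Lam (P i) n (x : Fin n → X)) + ENNReal.ofReal ε₂ :=
            add_le_add_right (hmass i) _
    calc ENNReal.ofReal (w i - 2 * γ) ≤ ENNReal.ofReal (w i * (1 - ε₂)) := by
          apply ENNReal.ofReal_le_ofReal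
          nlinarith [hw i, hε₂γ, hε₂1, hwi1, hγ]
      _ = ENNReal.ofReal (w i) * (1 - ENNReal.ofReal ε₂) := by
          rw [ENNReal.ofReal_mul (le_of_lt (hw i)), ENNReal.ofReal_sub _ (le_of_lt hε₂pos),
            ENNReal.ofReal_one]
      _ ≤ ENNReal.ofReal (w i) * ∑' x : ↥(G i), Lam (P i) n (x : Fin n → X) :=
          mul_le_mul_right hGi_big _
      _ ≤ ∑ k, ENNReal.ofReal (w k) * ∑' x : ↥(G i), Lam (P k) n (x : Fin n → X) :=
          Finset.single_le_sum
            (f := fun k => ENNReal.ofReal (w k) * ∑' x : ↥(G i), Lam (P k) n (x : Fin n → X))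
            (fun k _ => by positivity) (Finset.mem_univ i)
      _ = ∑' x : ↥(G i), mixProd w P n (x : Fin n → X) := hsplit.symm
  · -- upper bound
    calc (∑' x : ↥(G i), mixProd w P n (x : Fin n → X))
        = ∑ k, ENNReal.ofReal (w k) * ∑' x : ↥(G i), Lam (P k) n (x : Fin n → X) := hsplit
      _ = ENNReal.ofReal (w i) * (∑' x : ↥(G i), Lam (P i) n (x : Fin n → X))
          + ∑ k ∈ Finset.univ.erase i,
            ENNReal.ofReal (w k) * ∑' x : ↥(G i), Lam (P k) n (x : Fin n → X) :=
          (Finset.add_sum_erase _ _ (Finset.mem_univ i)).symm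
      _ ≤ ENNReal.ofReal (w i) * 1 + ∑ k ∈ Finset.univ.erase i,
            ENNReal.ofReal (w k) * ENNReal.ofReal ε₂ := by
          apply add_le_add
          · apply mul_le_mul_right
            rw [← hLam1 i]
            exact tsum_subtype_le' (Lam (P i) n) (G i)
          · apply Finset.sum_le_sum
            intro k hk
            apply mul_le_mul_right
            calc (∑' x : ↥(G i), Lam (P k) n (x : Fin n → X))
                ≤ ∑' x : ↥((G k)ᶜ), Lam (P k) n (x : Fin n → X) :=
                  tsum_subtype_mono (hdisj k (Finset.ne_of_mem_erase hk))
              _ ≤ ENNReal.ofReal ε₂ := hmass k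
      _ ≤ ENNReal.ofReal (w i) + 1 * ENNReal.ofReal ε₂ := by
          rw [mul_one, ← Finset.sum_mul]
          apply add_le_add_right
          apply mul_le_mul_left
          calc (∑ k ∈ Finset.univ.erase i, ENNReal.ofReal (w k))
              ≤ ∑ k, ENNReal.ofReal (w k) :=
                Finset.sum_le_sum_of_subset (Finset.erase_subset _ _)
            _ = ENNReal.ofReal (∑ k, w k) :=
                (ENNReal.ofReal_sum_of_nonneg (fun k _ => le_of_lt (hw k))).symm
            _ = 1 := by rw [hw1, ENNReal.ofReal_one]
      _ = ENNReal.ofReal (w i + ε₂) := by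
          rw [one_mul, ← ENNReal.ofReal_add (le_of_lt (hw i)) (le_of_lt hε₂pos)]
      _ ≤ ENNReal.ofReal (w i + 2 * γ) := ENNReal.ofReal_le_ofReal (by linarith)
end

section
/- Asymptotic smooth Rényi entropy of a mixture, lower bound: for the mixture source X of m i.i.d. components with strictly decreasing entropies, any α ∈ (0,1), and any ε with A_i < ε < A_{i+1}, liminf_{n→∞} (1/n) H_α^ε(P_{X^n}) ≥ H(X_i). -/
open scoped ENNReal
open Filter

/-- The smoothing set `B^ε(P)`. -/
def smoothSet {X : Type*} (P : X → ℝ≥0∞) (ε : ℝ) : Set (X → ℝ≥0∞) :=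
  {Q | (∀ x, Q x ≤ P x) ∧ ENNReal.ofReal (1 - ε) ≤ ∑' x, Q x}

/-- `r_α^ε(P) = inf_{Q ∈ B^ε(P)} ∑_x Q(x)^α`. -/
noncomputable def rSmooth {X : Type*} (P : X → ℝ≥0∞) (ε α : ℝ) : ℝ≥0∞ :=
  ⨅ Q ∈ smoothSet P ε, ∑' x, Q x ^ α

/-- The `ε`-smooth Rényi entropy of order `α` (extended-real valued). -/
noncomputable def smoothRenyi {X : Type*} (P : X → ℝ≥0∞) (ε α : ℝ) : EReal :=
  (((1 - α)⁻¹ : ℝ) : EReal) * ENNReal.log (rSmooth P ε α)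

/-- `A_i = ∑_{j=1}^{i-1} w_j` (0-based). -/
noncomputable def Aweight {m : ℕ} (w : Fin m → ℝ) (i : ℕ) : ℝ :=
  ∑ k ∈ Finset.univ.filter (fun k : Fin m => (k : ℕ) < i), w k

/-- Auxiliary: tsum of a product over `Fin n → X` factorizes. -/
lemma tsum_pi_prod {X : Type*} (g : X → ℝ≥0∞) (n : ℕ) :
    ∑' x : Fin n → X, ∏ t, g (x t) = (∑' y, g y) ^ n := by
  induction n with
  | zero =>
      have : (∑' _x : Fin 0 → X, (1:ℝ≥0∞)) = 1 := by
        rw [tsum_eq_single (fun i : Fin 0 => i.elim0)]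
        intro b hb; exact absurd (funext fun i => i.elim0) hb
      simpa using this
  | succ n ih =>
      rw [← (Fin.consEquiv (fun _ : Fin (n+1) => X)).tsum_eq (fun x => ∏ t, g (x t))]
      have : ∀ p : X × (Fin n → X),
          (∏ t, g ((Fin.consEquiv (fun _ : Fin (n+1) => X)) p t)) = g p.1 * ∏ t, g (p.2 t) := by
        intro p
        rw [Fin.prod_univ_succ]
        simp [Fin.consEquiv]
      rw [tsum_congr this,
        ENNReal.tsum_prod (f := fun (a : X) (b : Fin n → X) => g a * ∏ t, g (b t))]
      simp_rw [ENNReal.tsum_mul_left, ENNReal.tsum_mul_right]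
      rw [ih, pow_succ, mul_comm]

/-- Auxiliary: a good Chernoff exponent `s` for a distribution with entropy `h`. -/
lemma exists_good_s {X : Type*} (p : X → ℝ≥0∞) (h : ℝ) (hp1 : ∑' x, p x = 1)
    (hH : HasSum (fun x => (p x).toReal * Real.log (1 / (p x).toReal)) h)
    {β : ℝ} (hβ : 0 < β) :
    ∃ s : ℝ, 0 < s ∧ s ≤ 1 ∧
      ∑' x, p x ^ (1 + s) ≤ ENNReal.ofReal (Real.exp (-(s * (h - β)))) := by
  classical
  have hple : ∀ x, p x ≤ 1 := fun x => hp1 ▸ ENNReal.le_tsum x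
  have hpne : ∀ x, p x ≠ ⊤ := fun x => ne_top_of_le_ne_top ENNReal.one_ne_top (hple x)
  set f : X → ℝ := fun x => (p x).toReal with hfdef
  have hf0 : ∀ x, 0 ≤ f x := fun x => ENNReal.toReal_nonneg
  have hf1 : ∀ x, f x ≤ 1 := by
    intro x
    have := ENNReal.toReal_mono ENNReal.one_ne_top (hple x)
    simpa using this
  obtain ⟨F, hF⟩ : ∃ F : Finset X, h - β/2 < ∑ x ∈ F, f x * Real.log (1 / f x) :=
    (hH.eventually (eventually_gt_nhds (by linarith : h - β/2 < h))).exists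
  have hlim : Tendsto (fun s : ℝ => (∑ x ∈ F, (f x - f x ^ (1 + s))) / s)
      (nhdsWithin 0 (Set.Ioi 0)) (nhds (∑ x ∈ F, f x * Real.log (1 / f x))) := by
    have : ∀ x ∈ F, Tendsto (fun s : ℝ => (f x - f x ^ (1 + s)) / s)
        (nhdsWithin 0 (Set.Ioi 0)) (nhds (f x * Real.log (1 / f x))) := by
      intro x _
      rcases eq_or_lt_of_le (hf0 x) with h0 | h0
      · have hfx : f x = 0 := h0.symm
        rw [hfx]
        have hev0 : ∀ᶠ s : ℝ in nhdsWithin 0 (Set.Ioi 0),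
            ((0:ℝ) - (0:ℝ) ^ (1 + s)) / s = 0 := by
          filter_upwards [self_mem_nhdsWithin] with s hs
          have h1s : (1:ℝ) + s ≠ 0 := by have : (0:ℝ) < s := hs; linarith
          rw [Real.zero_rpow h1s]
          simp
        simpa using tendsto_const_nhds.congr' (hev0.mono fun s hs => hs.symm)
      · have hD : HasDerivAt (fun s : ℝ => f x ^ (1 + s)) (f x * Real.log (f x)) 0 := by
          have h1 : HasDerivAt (fun u : ℝ => f x ^ u) (f x * Real.log (f x)) ((1:ℝ) + 0) := by
            have := (Real.hasStrictDerivAt_const_rpow h0 ((1:ℝ) + 0)).hasDerivAt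
            simpa using this
          have h2 : HasDerivAt (fun s : ℝ => (1:ℝ) + s) 1 0 :=
            (hasDerivAt_id 0).const_add 1
          have := h1.comp 0 h2
          rw [mul_one] at this; exact this
        have hs := hasDerivAt_iff_tendsto_slope.mp hD
        have hs' : Tendsto (slope (fun s : ℝ => f x ^ (1 + s)) 0)
            (nhdsWithin 0 (Set.Ioi 0)) (nhds (f x * Real.log (f x))) :=
          hs.mono_left (nhdsWithin_mono 0 (fun s hs => by
            simp only [Set.mem_compl_iff, Set.mem_singleton_iff]
            exact ne_of_gt hs))
        have : Tendsto (fun s : ℝ => (f x - f x ^ (1 + s)) / s)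
            (nhdsWithin 0 (Set.Ioi 0)) (nhds (-(f x * Real.log (f x)))) := by
          have := hs'.neg
          refine Tendsto.congr ?_ this
          intro s
          rw [slope_def_field]
          simp only [sub_zero, add_zero, Real.rpow_one]
          ring
        convert this using 2
        rw [Real.log_div one_ne_zero (ne_of_gt h0), Real.log_one]
        ring
    have := tendsto_finset_sum F this
    refine Tendsto.congr ?_ this
    intro s
    rw [Finset.sum_div]
  have hev : ∀ᶠ s : ℝ in nhdsWithin 0 (Set.Ioi 0),
      h - β < (∑ x ∈ F, (f x - f x ^ (1 + s))) / s :=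
    hlim.eventually (eventually_gt_nhds (by linarith))
  have hev2 : ∀ᶠ s : ℝ in nhdsWithin 0 (Set.Ioi 0), s ∈ Set.Ioc (0:ℝ) 1 :=
    Ioc_mem_nhdsGT_of_mem (by constructor <;> norm_num)
  obtain ⟨s, hqs, hs0, hs1⟩ : ∃ s : ℝ, (h - β < (∑ x ∈ F, (f x - f x ^ (1 + s))) / s)
      ∧ 0 < s ∧ s ≤ 1 := by
    obtain ⟨s, h1, h2⟩ := (hev.and hev2).exists
    exact ⟨s, h1, h2.1, h2.2⟩
  refine ⟨s, hs0, hs1, ?_⟩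
  have hfpow : ∀ x, f x ^ ((1:ℝ) + s) ≤ f x := by
    intro x
    rcases eq_or_lt_of_le (hf0 x) with h0 | h0
    · rw [← h0, Real.zero_rpow (by linarith)]
    · simpa using Real.rpow_le_rpow_of_exponent_ge h0 (hf1 x) (by linarith : (1:ℝ) ≤ 1 + s)
  have hcF : s * (h - β) ≤ ∑ x ∈ F, (f x - f x ^ (1 + s)) := by
    have := (lt_div_iff₀ hs0).mp hqs
    nlinarith
  have hE1 : ∀ x, p x ^ ((1:ℝ) + s) ≤ p x := by
    intro x
    have := ENNReal.rpow_le_rpow_of_exponent_ge (hple x) (by linarith : (1:ℝ) ≤ 1 + s)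
    simpa using this
  have hDne : (∑' x, (p x - p x ^ ((1:ℝ) + s))) ≠ ⊤ := by
    have : (∑' x, (p x - p x ^ ((1:ℝ) + s))) ≤ ∑' x, p x :=
      ENNReal.tsum_le_tsum (fun x => tsub_le_self)
    rw [hp1] at this
    exact ne_top_of_le_ne_top ENNReal.one_ne_top this
  have hsplit : ∑' x, p x ^ ((1:ℝ) + s) = 1 - ∑' x, (p x - p x ^ ((1:ℝ) + s)) := by
    refine ENNReal.eq_sub_of_add_eq hDne ?_
    rw [← ENNReal.tsum_add, ← hp1]
    exact tsum_congr fun x => add_tsub_cancel_of_le (hE1 x)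
  have hterm : ∀ x, ENNReal.ofReal (f x - f x ^ ((1:ℝ) + s)) = p x - p x ^ ((1:ℝ) + s) := by
    intro x
    rcases eq_or_lt_of_le (hf0 x) with h0 | h0
    · have hp0 : p x = 0 := by
        rcases (ENNReal.toReal_eq_zero_iff (p x)).mp h0.symm with h | h
        · exact h
        · exact absurd h (hpne x)
      rw [hp0, ← h0, Real.zero_rpow (by linarith), ENNReal.zero_rpow_of_pos (by linarith)]
      simp
    · rw [ENNReal.ofReal_sub _ (Real.rpow_nonneg (hf0 x) _)]
      congr 1
      · exact ENNReal.ofReal_toReal (hpne x)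
      · rw [← ENNReal.ofReal_rpow_of_pos h0]
        congr 1
        exact ENNReal.ofReal_toReal (hpne x)
  have hFle : ENNReal.ofReal (s * (h - β)) ≤ ∑' x, (p x - p x ^ ((1:ℝ) + s)) := by
    calc ENNReal.ofReal (s * (h - β)) ≤ ENNReal.ofReal (∑ x ∈ F, (f x - f x ^ (1 + s))) :=
          ENNReal.ofReal_le_ofReal hcF
      _ = ∑ x ∈ F, ENNReal.ofReal (f x - f x ^ (1 + s)) :=
          ENNReal.ofReal_sum_of_nonneg (fun x _ => by linarith [hfpow x])
      _ = ∑ x ∈ F, (p x - p x ^ ((1:ℝ) + s)) := Finset.sum_congr rfl fun x _ => hterm x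
      _ ≤ _ := ENNReal.sum_le_tsum F
  rw [hsplit]
  calc (1:ℝ≥0∞) - ∑' x, (p x - p x ^ ((1:ℝ) + s))
      ≤ 1 - ENNReal.ofReal (s * (h - β)) := tsub_le_tsub_left hFle 1
    _ ≤ ENNReal.ofReal (Real.exp (-(s * (h - β)))) := by
        rcases le_or_gt 0 (s * (h - β)) with hc | hc
        · rw [← ENNReal.ofReal_one, ← ENNReal.ofReal_sub _ hc]
          exact ENNReal.ofReal_le_ofReal (by linarith [Real.add_one_le_exp (-(s * (h - β)))])
        · rw [ENNReal.ofReal_of_nonpos (le_of_lt hc), tsub_zero, ENNReal.one_le_ofReal,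
            ← Real.exp_zero]
          exact Real.exp_le_exp.mpr (by linarith)

/-- Asymptotic smooth Rényi entropy of a mixture, lower bound: for a mixture of
`m` i.i.d. sources with strictly decreasing entropies, `α ∈ (0,1)` and
`A_i < ε < A_{i+1}`, `liminf_{n→∞} (1/n) H_α^ε(P_{X^n}) ≥ H(X_i)`. -/
theorem mixture_smoothRenyi_liminf_ge {X : Type*} [Countable X] {m : ℕ}
    (w : Fin m → ℝ) (P : Fin m → X → ℝ≥0∞) (H : Fin m → ℝ)
    (hw : ∀ k, 0 < w k) (hw1 : ∑ k, w k = 1)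
    (hP : ∀ k, ∑' x, P k x = 1)
    (hH : ∀ k, HasSum (fun x => (P k x).toReal * Real.log (1 / (P k x).toReal)) (H k))
    (hanti : StrictAnti H) (α ε : ℝ) (hα : α ∈ Set.Ioo (0 : ℝ) 1)
    (i : Fin m) (hεl : Aweight w (i : ℕ) < ε) (hεu : ε < Aweight w ((i : ℕ) + 1)) :
    ((H i : ℝ) : EReal) ≤
      Filter.liminf
        (fun n : ℕ => (((n : ℝ)⁻¹ : ℝ) : EReal) * smoothRenyi (mixProd w P n) ε α)
        Filter.atTop := by
  classical
  obtain ⟨hα0, hα1⟩ := hα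
  have h1α : (0:ℝ) < 1 - α := by linarith
  have hwnn : ∀ k, (0:ℝ) ≤ w k := fun k => (hw k).le
  have hA1 : Aweight w ((i:ℕ)+1) ≤ 1 := by
    rw [← hw1]
    exact Finset.sum_le_sum_of_subset_of_nonneg (Finset.filter_subset _ _)
      (fun k _ _ => hwnn k)
  have hmix1 : ∀ n, ∑' x : Fin n → X, mixProd w P n x = 1 := by
    intro n
    have h1 : ∀ x : Fin n → X, mixProd w P n x = ∑ k, ENNReal.ofReal (w k) * ∏ t, P k (x t) :=
      fun _ => rfl
    rw [tsum_congr h1, Summable.tsum_finsetSum (fun k _ => ENNReal.summable)]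
    have h2 : ∀ k : Fin m, ∑' x : Fin n → X, ENNReal.ofReal (w k) * ∏ t, P k (x t)
        = ENNReal.ofReal (w k) := by
      intro k
      rw [ENNReal.tsum_mul_left, tsum_pi_prod, hP k, one_pow, mul_one]
    rw [Finset.sum_congr rfl fun k _ => h2 k,
      ← ENNReal.ofReal_sum_of_nonneg (fun k _ => hwnn k), hw1, ENNReal.ofReal_one]
  have hmixle1 : ∀ n (x : Fin n → X), mixProd w P n x ≤ 1 :=
    fun n x => (hmix1 n) ▸ ENNReal.le_tsum x
  have hPle1 : ∀ k x, P k x ≤ 1 := fun k x => (hP k) ▸ ENNReal.le_tsum x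
  have hpkle1 : ∀ (k : Fin m) n (x : Fin n → X), (∏ t, P k (x t)) ≤ 1 :=
    fun k n x => Finset.prod_le_one (fun t _ => zero_le) (fun t _ => hPle1 k (x t))
  have key : ∀ η : ℝ, 0 < η → ((H i - η : ℝ) : EReal) ≤
      Filter.liminf
        (fun n : ℕ => (((n : ℝ)⁻¹ : ℝ) : EReal) * smoothRenyi (mixProd w P n) ε α)
        Filter.atTop := by
    intro η hη
    choose s hs0 hs1 hsZ using
      fun k => exists_good_s (P k) (H k) (hP k) (hH k) (show (0:ℝ) < η/4 by linarith)
    set a : ℝ := H i - η with ha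
    set a' : ℝ := H i - η/2 with ha'
    set δ : ℝ := (Aweight w ((i:ℕ)+1) - ε)/2 with hδdef
    have hδ : 0 < δ := by rw [hδdef]; linarith
    have h1εδ : 0 ≤ 1 - ε - δ := by rw [hδdef]; linarith
    -- Chernoff-type bound for components `k ≤ i`
    have hK : ∀ n : ℕ, ∀ k : Fin m, (k:ℕ) ≤ (i:ℕ) →
        (∑' x : Fin n → X, if ENNReal.ofReal (Real.exp (-((n:ℝ) * a))) < mixProd w P n x
            then ∏ t, P k (x t) else 0)
          ≤ ENNReal.ofReal (Real.exp (-((n:ℝ) * (η/2))))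
            + ENNReal.ofReal (Real.exp (-((n:ℝ) * (s k * (η/4))))) := by
      intro n k hk
      have hHk : H i ≤ H k := by
        rcases lt_or_eq_of_le hk with h | h
        · exact (hanti (show k < i from h)).le
        · rw [Fin.ext h]
      set tn := ENNReal.ofReal (Real.exp (-((n:ℝ) * a))) with htn
      set c1 := ENNReal.ofReal (Real.exp (-((n:ℝ) * (η/2)))) with hc1
      set c2 := ENNReal.ofReal (Real.exp ((n:ℝ) * (s k * a'))) with hc2
      have htn0 : tn ≠ 0 := by
        rw [htn]
        simp [Real.exp_pos]
      have htnt : tn ≠ ⊤ := ENNReal.ofReal_ne_top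
      have hpt : ∀ x : Fin n → X,
          (if tn < mixProd w P n x then ∏ t, P k (x t) else 0)
            ≤ c1 * mixProd w P n x + c2 * (∏ t, P k (x t)) ^ (1 + s k) := by
        intro x
        by_cases hx : tn < mixProd w P n x
        · rw [if_pos hx]
          by_cases hcase : (∏ t, P k (x t)) ≤ ENNReal.ofReal (Real.exp (-((n:ℝ) * a')))
          · have h1 : (1:ℝ≥0∞) ≤ tn⁻¹ * mixProd w P n x := by
              rw [← ENNReal.inv_mul_cancel htn0 htnt]
              exact mul_le_mul_right hx.le _
            have h2 : ENNReal.ofReal (Real.exp (-((n:ℝ) * a'))) * tn⁻¹ = c1 := by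
              rw [htn, ← ENNReal.ofReal_inv_of_pos (Real.exp_pos _), ← Real.exp_neg,
                ← ENNReal.ofReal_mul (Real.exp_nonneg _), ← Real.exp_add, hc1]
              congr 2
              rw [ha, ha']
              ring
            calc (∏ t, P k (x t)) ≤ ENNReal.ofReal (Real.exp (-((n:ℝ) * a'))) * 1 := by
                  simpa using hcase
              _ ≤ ENNReal.ofReal (Real.exp (-((n:ℝ) * a'))) * (tn⁻¹ * mixProd w P n x) :=
                  mul_le_mul_right h1 _
              _ = c1 * mixProd w P n x := by rw [← mul_assoc, h2]
              _ ≤ _ := le_self_add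
          · push_neg at hcase
            have hpk0 : (∏ t, P k (x t)) ≠ 0 := by
              intro h0; rw [h0] at hcase; exact (not_lt.mpr zero_le) hcase
            have hpkt : (∏ t, P k (x t)) ≠ ⊤ :=
              ne_top_of_le_ne_top ENNReal.one_ne_top (hpkle1 k n x)
            have hrw : (∏ t, P k (x t))
                = (∏ t, P k (x t)) ^ (1 + s k) * (∏ t, P k (x t)) ^ (-(s k)) := by
              rw [← ENNReal.rpow_add _ _ hpk0 hpkt]
              norm_num
            have hmono : (∏ t, P k (x t)) ^ (-(s k)) ≤ c2 := by
              rw [ENNReal.rpow_neg]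
              have h3 : ENNReal.ofReal (Real.exp (-((n:ℝ) * a'))) ^ (s k)
                  ≤ (∏ t, P k (x t)) ^ (s k) :=
                ENNReal.rpow_le_rpow hcase.le (hs0 k).le
              refine le_trans (ENNReal.inv_le_inv.mpr h3) ?_
              rw [ENNReal.ofReal_rpow_of_pos (Real.exp_pos _), ← Real.exp_mul,
                ← ENNReal.ofReal_inv_of_pos (Real.exp_pos _), ← Real.exp_neg, hc2]
              apply le_of_eq
              congr 1
              ring
            calc (∏ t, P k (x t))
                = (∏ t, P k (x t)) ^ (1 + s k) * (∏ t, P k (x t)) ^ (-(s k)) := hrw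
              _ ≤ (∏ t, P k (x t)) ^ (1 + s k) * c2 := mul_le_mul_right hmono _
              _ = c2 * (∏ t, P k (x t)) ^ (1 + s k) := mul_comm _ _
              _ ≤ _ := le_add_self
        · rw [if_neg hx]; exact zero_le
      calc (∑' x : Fin n → X, if tn < mixProd w P n x then ∏ t, P k (x t) else 0)
          ≤ ∑' x : Fin n → X, (c1 * mixProd w P n x + c2 * (∏ t, P k (x t)) ^ (1 + s k)) :=
            ENNReal.tsum_le_tsum hpt
        _ = c1 * (∑' x : Fin n → X, mixProd w P n x)
            + c2 * ∑' x : Fin n → X, (∏ t, P k (x t)) ^ (1 + s k) := by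
            rw [ENNReal.tsum_add, ENNReal.tsum_mul_left, ENNReal.tsum_mul_left]
        _ ≤ c1 + ENNReal.ofReal (Real.exp (-((n:ℝ) * (s k * (η/4))))) := by
            rw [hmix1 n, mul_one]
            refine add_le_add_right ?_ _
            have hprw : ∀ x : Fin n → X,
                (∏ t, P k (x t)) ^ (1 + s k) = ∏ t, (P k (x t)) ^ (1 + s k) :=
              fun x => (ENNReal.prod_rpow_of_nonneg (by linarith [hs0 k] : (0:ℝ) ≤ 1 + s k)).symm
            rw [tsum_congr hprw, tsum_pi_prod (fun y => P k y ^ (1 + s k)) n]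
            calc c2 * (∑' y, P k y ^ (1 + s k)) ^ n
                ≤ c2 * (ENNReal.ofReal (Real.exp (-(s k * (H k - η/4))))) ^ n :=
                  mul_le_mul_right (pow_le_pow_left' (hsZ k) n) _
              _ ≤ ENNReal.ofReal (Real.exp (-((n:ℝ) * (s k * (η/4))))) := by
                  rw [hc2, ← ENNReal.ofReal_pow (Real.exp_nonneg _), ← Real.exp_nat_mul,
                    ← ENNReal.ofReal_mul (Real.exp_nonneg _), ← Real.exp_add]
                  apply ENNReal.ofReal_le_ofReal
                  apply Real.exp_le_exp.mpr
                  have h5 : a' - (H k - η/2) ≤ 0 := by rw [ha']; linarith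
                  have h6 : (0:ℝ) ≤ (n:ℝ) * s k := mul_nonneg (Nat.cast_nonneg n) (hs0 k).le
                  have h7 : ((n:ℝ) * s k) * (a' - (H k - η/2)) ≤ 0 :=
                    mul_nonpos_of_nonneg_of_nonpos h6 h5
                  nlinarith [h7]
    -- total bad mass bound
    set Fi : Finset (Fin m) := Finset.univ.filter (fun k : Fin m => (k:ℕ) ≤ (i:ℕ)) with hFi
    have hAwF : Aweight w ((i:ℕ)+1) = ∑ k ∈ Fi, w k := by
      rw [Aweight, hFi]
      congr 1
      ext k
      simp [Nat.lt_succ_iff]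
    have hsum_not :
        ∑ k ∈ Finset.univ.filter (fun k : Fin m => ¬ (k:ℕ) ≤ (i:ℕ)), w k
          = 1 - Aweight w ((i:ℕ)+1) := by
      have h9 := Finset.sum_filter_add_sum_filter_not Finset.univ
        (fun k : Fin m => (k:ℕ) ≤ (i:ℕ)) w
      rw [hw1] at h9
      rw [hAwF, hFi]
      linarith [h9]
    have hMle : ∀ n : ℕ,
        (∑' x : Fin n → X, if ENNReal.ofReal (Real.exp (-((n:ℝ) * a))) < mixProd w P n x
            then mixProd w P n x else 0)
          ≤ ENNReal.ofReal (∑ k ∈ Fi, w k *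
              (Real.exp (-((n:ℝ) * (η/2))) + Real.exp (-((n:ℝ) * (s k * (η/4))))))
            + ENNReal.ofReal (1 - Aweight w ((i:ℕ)+1)) := by
      intro n
      have hdec : ∀ x : Fin n → X,
          (if ENNReal.ofReal (Real.exp (-((n:ℝ) * a))) < mixProd w P n x
              then mixProd w P n x else 0)
            = ∑ k, ENNReal.ofReal (w k) *
                (if ENNReal.ofReal (Real.exp (-((n:ℝ) * a))) < mixProd w P n x
                  then ∏ t, P k (x t) else 0) := by
        intro x
        by_cases hx : ENNReal.ofReal (Real.exp (-((n:ℝ) * a))) < mixProd w P n x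
        · rw [if_pos hx]
          simp_rw [if_pos hx]
          rfl
        · rw [if_neg hx]
          simp_rw [if_neg hx]
          simp
      rw [tsum_congr hdec, Summable.tsum_finsetSum (fun k _ => ENNReal.summable)]
      have hswap : ∀ k : Fin m,
          (∑' x : Fin n → X, ENNReal.ofReal (w k) *
            (if ENNReal.ofReal (Real.exp (-((n:ℝ) * a))) < mixProd w P n x
              then ∏ t, P k (x t) else 0))
          = ENNReal.ofReal (w k) *
            (∑' x : Fin n → X, if ENNReal.ofReal (Real.exp (-((n:ℝ) * a))) < mixProd w P n x
              then ∏ t, P k (x t) else 0) := fun k => ENNReal.tsum_mul_left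
      rw [Finset.sum_congr rfl fun k _ => hswap k]
      rw [← Finset.sum_filter_add_sum_filter_not Finset.univ (fun k : Fin m => (k:ℕ) ≤ (i:ℕ))]
      refine add_le_add ?_ ?_
      · calc (∑ k ∈ Finset.univ.filter (fun k : Fin m => (k:ℕ) ≤ (i:ℕ)),
              ENNReal.ofReal (w k) *
              (∑' x : Fin n → X, if ENNReal.ofReal (Real.exp (-((n:ℝ) * a))) < mixProd w P n x
                then ∏ t, P k (x t) else 0))
            ≤ ∑ k ∈ Fi, ENNReal.ofReal (w k) *
                (ENNReal.ofReal (Real.exp (-((n:ℝ) * (η/2))))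
                  + ENNReal.ofReal (Real.exp (-((n:ℝ) * (s k * (η/4)))))) := by
              rw [← hFi]
              refine Finset.sum_le_sum fun k hk => mul_le_mul_right ?_ _
              refine hK n k ?_
              rw [hFi] at hk
              simpa using (Finset.mem_filter.mp hk).2
          _ = ENNReal.ofReal (∑ k ∈ Fi, w k *
              (Real.exp (-((n:ℝ) * (η/2))) + Real.exp (-((n:ℝ) * (s k * (η/4)))))) := by
              rw [ENNReal.ofReal_sum_of_nonneg (fun k _ => mul_nonneg (hwnn k) (by positivity))]
              refine Finset.sum_congr rfl fun k _ => ?_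
              rw [ENNReal.ofReal_mul (hwnn k), ENNReal.ofReal_add (Real.exp_nonneg _)
                (Real.exp_nonneg _)]
      · calc (∑ k ∈ Finset.univ.filter (fun k : Fin m => ¬ (k:ℕ) ≤ (i:ℕ)),
              ENNReal.ofReal (w k) *
              (∑' x : Fin n → X, if ENNReal.ofReal (Real.exp (-((n:ℝ) * a))) < mixProd w P n x
                then ∏ t, P k (x t) else 0))
            ≤ ∑ k ∈ Finset.univ.filter (fun k : Fin m => ¬ (k:ℕ) ≤ (i:ℕ)),
                ENNReal.ofReal (w k) * 1 := by
              refine Finset.sum_le_sum fun k _ => mul_le_mul_right ?_ _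
              have h10 : (∑' x : Fin n → X,
                  if ENNReal.ofReal (Real.exp (-((n:ℝ) * a))) < mixProd w P n x
                    then ∏ t, P k (x t) else 0)
                  ≤ ∑' x : Fin n → X, ∏ t, P k (x t) :=
                ENNReal.tsum_le_tsum fun x => by split <;> simp
              rwa [tsum_pi_prod, hP k, one_pow] at h10
          _ = ENNReal.ofReal (1 - Aweight w ((i:ℕ)+1)) := by
              simp_rw [mul_one]
              rw [← ENNReal.ofReal_sum_of_nonneg (fun k _ => hwnn k), hsum_not]
    -- eventually the bad mass is at most 1 - ε - δ
    have hRn : Filter.Tendsto (fun n : ℕ => ∑ k ∈ Fi, w k *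
        (Real.exp (-((n:ℝ) * (η/2))) + Real.exp (-((n:ℝ) * (s k * (η/4))))))
        Filter.atTop (nhds 0) := by
      have h0 : ∀ c : ℝ, 0 < c →
          Filter.Tendsto (fun n : ℕ => Real.exp (-((n:ℝ) * c))) Filter.atTop (nhds 0) := by
        intro c hc
        exact Real.tendsto_exp_atBot.comp (Filter.tendsto_neg_atTop_atBot.comp
          ((tendsto_natCast_atTop_atTop).atTop_mul_const hc))
      have h11 := tendsto_finset_sum Fi (fun k (_ : k ∈ Fi) =>
        (((h0 (η/2) (by linarith)).add
          (h0 (s k * (η/4)) (mul_pos (hs0 k) (by linarith)))).const_mul (w k)))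
      simpa using h11
    have hevM : ∀ᶠ n : ℕ in Filter.atTop,
        (∑' x : Fin n → X, if ENNReal.ofReal (Real.exp (-((n:ℝ) * a))) < mixProd w P n x
            then mixProd w P n x else 0)
          ≤ ENNReal.ofReal (1 - ε - δ) := by
      filter_upwards [hRn.eventually (eventually_lt_nhds hδ)] with n hn
      refine (hMle n).trans ?_
      have hRnn : 0 ≤ ∑ k ∈ Fi, w k *
          (Real.exp (-((n:ℝ) * (η/2))) + Real.exp (-((n:ℝ) * (s k * (η/4))))) :=
        Finset.sum_nonneg fun k _ => mul_nonneg (hwnn k) (by positivity)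
      rw [← ENNReal.ofReal_add hRnn (by linarith)]
      apply ENNReal.ofReal_le_ofReal
      rw [hδdef] at hn ⊢
      linarith
    -- main eventual lower bound
    have hmain : ∀ᶠ n : ℕ in Filter.atTop,
        ((a + (n:ℝ)⁻¹ * ((1-α)⁻¹ * Real.log δ) : ℝ) : EReal)
          ≤ (((n : ℝ)⁻¹ : ℝ) : EReal) * smoothRenyi (mixProd w P n) ε α := by
      filter_upwards [hevM, Filter.eventually_ge_atTop 1] with n hn hn1
      have hn0 : (0:ℝ) < (n:ℝ) := by exact_mod_cast Nat.cast_pos.mpr hn1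
      have hr : ENNReal.ofReal (δ * Real.exp ((n:ℝ) * ((1-α) * a)))
          ≤ rSmooth (mixProd w P n) ε α := by
        rw [rSmooth]
        refine le_iInf fun Q => le_iInf fun hQ => ?_
        obtain ⟨hQle, hQm⟩ := hQ
        set tn := ENNReal.ofReal (Real.exp (-((n:ℝ) * a))) with htn
        have hQle1 : ∀ x : Fin n → X, Q x ≤ 1 := fun x => (hQle x).trans (hmixle1 n x)
        have hsplitQ : (∑' x : Fin n → X, Q x)
            = (∑' x : Fin n → X, if tn < mixProd w P n x then Q x else 0)
              + (∑' x : Fin n → X, if tn < mixProd w P n x then 0 else Q x) := by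
          rw [← ENNReal.tsum_add]
          exact tsum_congr fun x => by split <;> simp
        have hB : (∑' x : Fin n → X, if tn < mixProd w P n x then Q x else 0)
            ≤ ENNReal.ofReal (1-ε-δ) := by
          refine le_trans (ENNReal.tsum_le_tsum fun x => ?_) hn
          split
          · exact hQle x
          · exact le_rfl
        have hG : ENNReal.ofReal δ
            ≤ (∑' x : Fin n → X, if tn < mixProd w P n x then 0 else Q x) := by
          have h7 : ENNReal.ofReal (1-ε) ≤ ENNReal.ofReal (1-ε-δ)
              + (∑' x : Fin n → X, if tn < mixProd w P n x then 0 else Q x) := by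
            refine hQm.trans ?_
            rw [hsplitQ]
            exact add_le_add_left hB _
          have h8 : ENNReal.ofReal (1-ε) = ENNReal.ofReal (1-ε-δ) + ENNReal.ofReal δ := by
            rw [← ENNReal.ofReal_add h1εδ hδ.le]
            congr 1
            ring
          rw [h8] at h7
          exact (ENNReal.add_le_add_iff_left ENNReal.ofReal_ne_top).mp h7
        have hpt2 : ∀ x : Fin n → X,
            (if tn < mixProd w P n x then 0 else Q x) * tn ^ (α - 1) ≤ Q x ^ α := by
          intro x
          by_cases hx : tn < mixProd w P n x
          · rw [if_pos hx]
            simp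
          · rw [if_neg hx]
            push_neg at hx
            by_cases hQ0 : Q x = 0
            · rw [hQ0]
              simp [ENNReal.zero_rpow_of_pos hα0]
            · have hQt : Q x ≤ tn := (hQle x).trans hx
              have hQtop : Q x ≠ ⊤ := ne_top_of_le_ne_top ENNReal.one_ne_top (hQle1 x)
              have hQrw : Q x ^ α = Q x * Q x ^ (α - 1) := by
                conv_lhs => rw [show α = 1 + (α - 1) by ring]
                rw [ENNReal.rpow_add _ _ hQ0 hQtop, ENNReal.rpow_one]
              rw [hQrw]
              refine mul_le_mul_right ?_ _
              rw [show α - 1 = -(1 - α) by ring, ENNReal.rpow_neg, ENNReal.rpow_neg]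
              exact ENNReal.inv_le_inv.mpr (ENNReal.rpow_le_rpow hQt (by linarith))
        calc ENNReal.ofReal (δ * Real.exp ((n:ℝ) * ((1-α) * a)))
            = ENNReal.ofReal δ * tn ^ (α - 1) := by
              rw [htn, ENNReal.ofReal_rpow_of_pos (Real.exp_pos _), ← Real.exp_mul,
                ← ENNReal.ofReal_mul hδ.le]
              congr 2
              ring
          _ ≤ (∑' x : Fin n → X, if tn < mixProd w P n x then 0 else Q x) * tn ^ (α-1) :=
              mul_le_mul_left hG _
          _ = ∑' x : Fin n → X, (if tn < mixProd w P n x then 0 else Q x) * tn ^ (α-1) :=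
              ENNReal.tsum_mul_right.symm
          _ ≤ ∑' x : Fin n → X, Q x ^ α := ENNReal.tsum_le_tsum hpt2
      have hδexp_pos : (0:ℝ) < δ * Real.exp ((n:ℝ) * ((1-α) * a)) := by positivity
      have hlog : ((Real.log (δ * Real.exp ((n:ℝ) * ((1-α) * a))) : ℝ) : EReal)
          ≤ ENNReal.log (rSmooth (mixProd w P n) ε α) := by
        have h12 := ENNReal.log_le_log_iff.mpr hr
        rwa [ENNReal.log_ofReal_of_pos hδexp_pos] at h12
      have hsm : (((1-α)⁻¹ * Real.log (δ * Real.exp ((n:ℝ) * ((1-α) * a))) : ℝ) : EReal)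
          ≤ smoothRenyi (mixProd w P n) ε α := by
        rw [smoothRenyi, EReal.coe_mul]
        exact mul_le_mul_of_nonneg_left hlog
          (by exact_mod_cast inv_nonneg.mpr h1α.le : (0:EReal) ≤ ((1-α)⁻¹ : ℝ))
      have heq : a + (n:ℝ)⁻¹ * ((1-α)⁻¹ * Real.log δ)
          = (n:ℝ)⁻¹ * ((1-α)⁻¹ * Real.log (δ * Real.exp ((n:ℝ) * ((1-α) * a)))) := by
        have hne : (n:ℝ) ≠ 0 := ne_of_gt hn0
        have hαne : (1-α) ≠ 0 := ne_of_gt h1α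
        rw [Real.log_mul (ne_of_gt hδ) (Real.exp_ne_zero _), Real.log_exp]
        field_simp
        ring
      rw [heq, EReal.coe_mul]
      exact mul_le_mul_of_nonneg_left hsm
        (by exact_mod_cast inv_nonneg.mpr hn0.le : (0:EReal) ≤ ((n:ℝ)⁻¹ : ℝ))
    -- conclude via liminf
    have hdt : Filter.Tendsto (fun n : ℕ => ((a + (n:ℝ)⁻¹ * ((1-α)⁻¹ * Real.log δ) : ℝ) : EReal))
        Filter.atTop (nhds ((a : ℝ) : EReal)) := by
      apply (continuous_coe_real_ereal.tendsto _).comp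
      have h13 : Filter.Tendsto (fun n : ℕ => (n:ℝ)⁻¹) Filter.atTop (nhds 0) :=
        tendsto_inv_atTop_nhds_zero_nat
      have h14 := (h13.mul_const ((1-α)⁻¹ * Real.log δ)).const_add a
      simpa using h14
    have h15 := Filter.liminf_le_liminf hmain
    rw [hdt.liminf_eq] at h15
    exact h15
  -- let η → 0
  have htend : Filter.Tendsto (fun j : ℕ => ((H i - 1/((j:ℝ)+1) : ℝ) : EReal))
      Filter.atTop (nhds ((H i : ℝ) : EReal)) := by
    apply (continuous_coe_real_ereal.tendsto _).comp
    have h16 : Filter.Tendsto (fun j : ℕ => 1/((j:ℝ)+1)) Filter.atTop (nhds 0) :=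
      tendsto_one_div_add_atTop_nhds_zero_nat
    have h17 := (tendsto_const_nhds (x := H i) (f := Filter.atTop (α := ℕ))).sub h16
    simpa using h17
  exact le_of_tendsto htend (Filter.Eventually.of_forall fun j => key _ (by positivity))
end
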